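/- arXiv:2304.00945 — 2 statements merged into one kernel-verified Lean document; each statement's English description precedes it below -/
import Mathlib

section
/- Let G be a 3-connected graph and (A,B) a nontrivial tri-separation of G. Then (A,B) is totally nested if and only if (A,B) is strong and nested with every strong nontrivial tri-separation of G. -/
set_option linter.unusedVariables false
set_option linter.unusedSectionVars false


namespace Paper

open SimpleGraph

variable {V : Type*} [Fintype V] [DecidableEq V]

/-- A graph is `k`-connected if it has more than `k` vertices and deleting
fewer than `k` vertices never disconnects it. -/
def KConnected {W : Type*} (k : ℕ) (H : SimpleGraph W) : Prop :=
  k < Nat.card W ∧ ∀ S : Set W, S.ncard < k → (H.induce Sᶜ).Connected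

/-- A mixed-separation of `G`: `A ∪ B = V(G)` and both `A \ B` and `B \ A` are nonempty. -/
def MixedSep (G : SimpleGraph V) (A B : Set V) : Prop :=
  A ∪ B = Set.univ ∧ (A \ B).Nonempty ∧ (B \ A).Nonempty

/-- The edges of the separator of `(A,B)`: the edges between `A \ B` and `B \ A`. -/
def sepEdges (G : SimpleGraph V) (A B : Set V) : Set (Sym2 V) :=
  {e | e ∈ G.edgeSet ∧ ∃ x ∈ A \ B, ∃ y ∈ B \ A, e = s(x, y)}

/-- The separator of `(A,B)`: the vertices of `A ∩ B` together with the
edges between `A \ B` and `B \ A`, viewed as a set in `V ⊕ Sym2 V`. -/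
def sepSet (G : SimpleGraph V) (A B : Set V) : Set (V ⊕ Sym2 V) :=
  (Sum.inl '' (A ∩ B)) ∪ (Sum.inr '' sepEdges G A B)

/-- The order of a mixed-separation: the size of its separator. -/
noncomputable def sepOrder (G : SimpleGraph V) (A B : Set V) : ℕ :=
  (sepSet G A B).ncard

/-- A mixed `k`-separation. -/
def MixedKSep (G : SimpleGraph V) (k : ℕ) (A B : Set V) : Prop :=
  MixedSep G A B ∧ sepOrder G A B = k

/-- A tri-separation: a mixed 3-separation such that every vertex of `A ∩ B`
has at least two neighbours in both `G[A]` and `G[B]`. -/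
def TriSep (G : SimpleGraph V) (A B : Set V) : Prop :=
  MixedKSep G 3 A B ∧
    ∀ v ∈ A ∩ B, 2 ≤ (G.neighborSet v ∩ A).ncard ∧ 2 ≤ (G.neighborSet v ∩ B).ncard

/-- Two mixed-separations are nested if, after possibly swapping the names of
the sides of either one, `A ⊆ C` and `B ⊇ D`. -/
def Nested (A B C D : Set V) : Prop :=
  (A ⊆ C ∧ D ⊆ B) ∨ (A ⊆ D ∧ C ⊆ B) ∨ (B ⊆ C ∧ D ⊆ A) ∨ (B ⊆ D ∧ C ⊆ A)

/-- The induced subgraph `G[A]` contains a cycle. -/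
def HasCycleIn (G : SimpleGraph V) (A : Set V) : Prop :=
  ∃ (u : V) (p : G.Walk u u), p.IsCycle ∧ ∀ x ∈ p.support, x ∈ A

/-- A mixed 3-separation is nontrivial if both sides induce a subgraph containing a cycle. -/
def NontrivialSep (G : SimpleGraph V) (A B : Set V) : Prop :=
  HasCycleIn G A ∧ HasCycleIn G B

/-- A mixed-separation is strong if every vertex in its separator has degree at least 4. -/
def StrongSep (G : SimpleGraph V) (A B : Set V) : Prop :=
  ∀ v ∈ A ∩ B, 4 ≤ (G.neighborSet v).ncard

/-- A tri-separation is totally nested if it is nested with every tri-separation of `G`. -/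
def TotallyNested (G : SimpleGraph V) (A B : Set V) : Prop :=
  ∀ C D : Set V, TriSep G C D → Nested A B C D

/-- A trivial tri-separation: its sides are the sides `{v}` and `V \ {v}` of an
atomic cut at a degree-3 vertex `v`. -/
def TrivialSep (G : SimpleGraph V) (A B : Set V) : Prop :=
  ∃ v : V, (G.neighborSet v).ncard = 3 ∧
    ((A = {v} ∧ B = {v}ᶜ) ∨ (B = {v} ∧ A = {v}ᶜ))

/-- Diagonal edges of the crossing-diagram of `(A,B)` and `(C,D)`:
edges whose endvertices lie in opposite corners. -/
def diagEdges (G : SimpleGraph V) (A B C D : Set V) : Set (Sym2 V) :=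
  {e | e ∈ G.edgeSet ∧ ∃ x y, e = s(x, y) ∧
    ((x ∈ (A \ B) ∩ (C \ D) ∧ y ∈ (B \ A) ∩ (D \ C)) ∨
     (x ∈ (A \ B) ∩ (D \ C) ∧ y ∈ (B \ A) ∩ (C \ D)))}

/-- The centre of the crossing-diagram: `A ∩ B ∩ C ∩ D` together with the diagonal edges. -/
def centre (G : SimpleGraph V) (A B C D : Set V) : Set (V ⊕ Sym2 V) :=
  (Sum.inl '' (A ∩ B ∩ C ∩ D)) ∪ (Sum.inr '' diagEdges G A B C D)

/-- The link for the side `C` in the crossing-diagram of `(A,B)` and `(C,D)`: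
the vertices `(A ∩ B) \ D` together with the non-diagonal edges of the separator
of `(A,B)` having an endvertex in a corner for `C`. -/
def link (G : SimpleGraph V) (A B C D : Set V) : Set (V ⊕ Sym2 V) :=
  (Sum.inl '' ((A ∩ B) \ D)) ∪
    (Sum.inr '' {e | e ∈ sepEdges G A B ∧ e ∉ diagEdges G A B C D ∧ ∃ x ∈ e, x ∈ C \ D})

/-- The corner-separator at the corner for `{A,C}`: the union of the links for `A`
and for `C` together with the centre, minus the diagonal edges without an
endvertex in the corner for `{A,C}`. -/
def cornerSep (G : SimpleGraph V) (A B C D : Set V) : Set (V ⊕ Sym2 V) :=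
  link G C D A B ∪ link G A B C D ∪ (Sum.inl '' (A ∩ B ∩ C ∩ D)) ∪
    (Sum.inr '' {e | e ∈ diagEdges G A B C D ∧ ∃ x ∈ e, x ∈ (A \ B) ∩ (C \ D)})

/-- Jumping edges: edges joining vertices of two opposite links. -/
def jumpEdges (G : SimpleGraph V) (A B C D : Set V) : Set (Sym2 V) :=
  {e | e ∈ G.edgeSet ∧ ∃ x y, e = s(x, y) ∧
    ((x ∈ (A ∩ B) \ D ∧ y ∈ (A ∩ B) \ C) ∨ (x ∈ (C ∩ D) \ B ∧ y ∈ (C ∩ D) \ A))}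

/-- A 2-separation: a separation of order two with no edges in its separator. -/
def TwoSep (G : SimpleGraph V) (A B : Set V) : Prop :=
  A ∪ B = Set.univ ∧ (A \ B).Nonempty ∧ (B \ A).Nonempty ∧
    (A ∩ B).ncard = 2 ∧ sepEdges G A B = ∅

/-- `K` is (the vertex set of) a connected component of `G - S`. -/
def IsCompOf (G : SimpleGraph V) (S K : Set V) : Prop :=
  ∃ c : (G.induce Sᶜ).ConnectedComponent, K = Subtype.val '' c.supp

section Infrastructure

variable {G : SimpleGraph V} {A B C D S X : Set V} {v w x y z : V}

lemma sym2_ne (h1 : x ≠ z) (h2 : x ≠ w) : s(x, y) ≠ s(z, w) := by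
  intro h
  have hx : x ∈ s(z, w) := h ▸ Sym2.mem_mk_left x y
  rw [Sym2.mem_iff] at hx
  tauto

lemma mem_sepEdges_intro (h : G.Adj x y) (hx : x ∈ A \ B) (hy : y ∈ B \ A) :
    s(x, y) ∈ sepEdges G A B :=
  ⟨G.mem_edgeSet.2 h, x, hx, y, hy, rfl⟩

lemma sepEdges_comm : sepEdges G A B = sepEdges G B A := by
  ext e
  constructor <;> rintro ⟨he, x, hx, y, hy, rfl⟩ <;>
    exact ⟨he, y, hy, x, hx, Sym2.eq_swap⟩

lemma sepOrder_eq : sepOrder G A B = (A ∩ B).ncard + (sepEdges G A B).ncard := by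
  unfold sepOrder sepSet
  rw [Set.ncard_union_eq ?_ (Set.toFinite _) (Set.toFinite _),
    Set.ncard_image_of_injective _ Sum.inl_injective,
    Set.ncard_image_of_injective _ Sum.inr_injective]
  rw [Set.disjoint_iff]
  rintro u ⟨⟨p, -, rfl⟩, ⟨q, -, h⟩⟩
  exact absurd h (by simp)

lemma sepOrder_comm : sepOrder G A B = sepOrder G B A := by
  rw [sepOrder_eq, sepOrder_eq, Set.inter_comm, sepEdges_comm]

lemma MixedSep.symm (h : MixedSep G A B) : MixedSep G B A :=
  ⟨by rw [Set.union_comm]; exact h.1, h.2.2, h.2.1⟩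

lemma TriSep.symm (h : TriSep G A B) : TriSep G B A := by
  refine ⟨⟨h.1.1.symm, ?_⟩, fun u hu => ⟨(h.2 u (by rwa [Set.inter_comm])).2,
    (h.2 u (by rwa [Set.inter_comm])).1⟩⟩
  rw [← sepOrder_comm]; exact h.1.2

lemma StrongSep.symm (h : StrongSep G A B) : StrongSep G B A := by
  intro u hu; exact h u (by rwa [Set.inter_comm])

lemma nested_comm_right : Nested A B C D ↔ Nested A B D C := by
  unfold Nested; tauto

lemma HasCycleIn.three_le_ncard (h : HasCycleIn G A) : 3 ≤ A.ncard := by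
  obtain ⟨u, p, hc, hsup⟩ := h
  have h3 : 3 ≤ p.length := hc.three_le_length
  have hnd : p.support.tail.Nodup := hc.2
  have hlen : p.support.tail.length = p.length := by
    simp [SimpleGraph.Walk.length_support]
  have hsub : ↑p.support.tail.toFinset ⊆ A := by
    intro x hx
    simp only [Finset.coe_sort_coe, List.coe_toFinset, Set.mem_setOf_eq] at hx
    exact hsup x (List.mem_of_mem_tail hx)
  calc 3 ≤ p.support.tail.toFinset.card := by
        rw [List.toFinset_card_of_nodup hnd]; omega
    _ = (↑p.support.tail.toFinset : Set V).ncard := (Set.ncard_coe_finset _).symm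
    _ ≤ A.ncard := Set.ncard_le_ncard hsub A.toFinite

end Infrastructure


section Connectivity

variable {G : SimpleGraph V} {A B C D S X : Set V} {c d v w x y z : V}

lemma walk_cross (p : G.Walk c d) : c ∈ X → d ∉ X →
    ∃ u u', G.Adj u u' ∧ u ∈ X ∧ u' ∉ X ∧ u ∈ p.support ∧ u' ∈ p.support := by
  induction p with
  | nil => intro hc hd; exact absurd hc hd
  | @cons a m e h q ih =>
    intro hc hd
    by_cases hm : m ∈ X
    · obtain ⟨u, u', h1, h2, h3, h4, h5⟩ := ih hm hd
      exact ⟨u, u', h1, h2, h3, by simp [h4], by simp [h5]⟩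
    · exact ⟨a, m, h, hc, hm, by simp, by simp⟩

lemma exists_walk_avoid (h3 : KConnected 3 G) (hS : S.ncard ≤ 2)
    (hc : c ∉ S) (hd : d ∉ S) :
    ∃ p : G.Walk c d, ∀ x ∈ p.support, x ∉ S := by
  have hconn := h3.2 S (by omega)
  have hcc : c ∈ Sᶜ := hc
  have hdc : d ∈ Sᶜ := hd
  obtain ⟨q⟩ := hconn.preconnected ⟨c, hcc⟩ ⟨d, hdc⟩
  let f : G.induce Sᶜ →g G := ⟨Subtype.val, fun {a b} h => h⟩
  refine ⟨q.map f, ?_⟩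
  intro x hx
  rw [SimpleGraph.Walk.support_map, List.mem_map] at hx
  obtain ⟨⟨a, ha⟩, -, rfl⟩ := hx
  exact ha

lemma card_ge (h3 : KConnected 3 G) : 4 ≤ Nat.card V := h3.1

lemma three_le_deg (h3 : KConnected 3 G) (v : V) : 3 ≤ (G.neighborSet v).ncard := by
  by_contra hlt
  push_neg at hlt
  set S := G.neighborSet v with hSdef
  have hvS : v ∉ S := G.notMem_neighborSet_self
  have hcompl : S.ncard + Sᶜ.ncard = Nat.card V := Set.ncard_add_ncard_compl S
  have hd : (Sᶜ \ {v}).Nonempty := by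
    rw [Set.nonempty_iff_ne_empty]
    intro hemp
    have hsub : Sᶜ ⊆ {v} := by rwa [← Set.diff_eq_empty]
    have := Set.ncard_le_ncard hsub (Set.finite_singleton v)
    rw [Set.ncard_singleton] at this
    have := card_ge h3
    omega
  obtain ⟨d, hdc, hdv⟩ := hd
  obtain ⟨p, hp⟩ := exists_walk_avoid h3 (by omega) hvS hdc
  obtain ⟨u, u', hadj, hu, hu', hus, hu's⟩ :=
    walk_cross (X := {v}) p rfl (by simpa using hdv)
  rw [Set.mem_singleton_iff] at hu
  subst hu
  exact hp u' hu's hadj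

end Connectivity


section F2

variable {G : SimpleGraph V} {A B C D S X N : Set V} {c d v w x y z : V}

lemma mem_of_union_univ (huniv : C ∪ D = Set.univ) (hx : x ∉ C) : x ∈ D := by
  have := Set.eq_univ_iff_forall.mp huniv x
  rw [Set.mem_union] at this
  tauto

lemma ncard_split (huniv : C ∪ D = Set.univ) (N : Set V) :
    N.ncard = (N ∩ (C ∩ D)).ncard + (N ∩ (C \ D)).ncard + (N ∩ (D \ C)).ncard := by
  have hall : ∀ x, x ∈ C ∨ x ∈ D := by
    intro x
    have := Set.eq_univ_iff_forall.mp huniv x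
    rwa [Set.mem_union] at this
  have hsplit : N = (N ∩ (C ∩ D)) ∪ (N ∩ (C \ D)) ∪ (N ∩ (D \ C)) := by
    ext a
    simp only [Set.mem_union, Set.mem_inter_iff, Set.mem_diff]
    have := hall a
    tauto
  nth_rewrite 1 [hsplit]
  rw [Set.ncard_union_eq ?d1 (Set.toFinite _) (Set.toFinite _),
      Set.ncard_union_eq ?d2 (Set.toFinite _) (Set.toFinite _)]
  case d1 =>
    rw [Set.disjoint_left]
    intro a ha hb
    simp only [Set.mem_union, Set.mem_inter_iff, Set.mem_diff] at ha hb
    tauto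
  case d2 =>
    rw [Set.disjoint_left]
    intro a ha hb
    simp only [Set.mem_inter_iff, Set.mem_diff] at ha hb
    tauto

lemma edges_at_ncard (hx : x ∈ C \ D) :
    ((fun y => s(x, y)) '' (G.neighborSet x ∩ (D \ C))).ncard
      = (G.neighborSet x ∩ (D \ C)).ncard := by
  apply Set.ncard_image_of_injOn
  rintro y ⟨-, hy⟩ y' ⟨-, hy'⟩ he
  rw [Sym2.eq_iff] at he
  rcases he with ⟨-, h⟩ | ⟨h1, h2⟩
  · exact h
  · rw [← h1] at hy'
    exact absurd hx.1 hy'.2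

lemma edges_at_subset (hx : x ∈ C \ D) :
    ((fun y => s(x, y)) '' (G.neighborSet x ∩ (D \ C))) ⊆ sepEdges G C D := by
  rintro e ⟨y, ⟨hyN, hyD⟩, rfl⟩
  exact ⟨G.mem_edgeSet.2 hyN, x, hx, y, hyD, rfl⟩

lemma mixed_order_ge (h3 : KConnected 3 G) (hm : MixedSep G C D) :
    3 ≤ sepOrder G C D := by
  haveI hNE : Nonempty V := by
    have h := h3.1
    rw [Nat.card_eq_fintype_card] at h
    exact Fintype.card_pos_iff.mp (by omega)
  by_contra hlt
  push_neg at hlt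
  rw [sepOrder_eq] at hlt
  set T : Set V := {x | x ∈ C \ D ∧ ∃ y ∈ D \ C, G.Adj x y} with hTdef
  have hTC : T ⊆ C \ D := fun x hx => hx.1
  have hTm : T.ncard ≤ (sepEdges G C D).ncard := by
    apply Set.ncard_le_ncard_of_injOn
      (fun x => s(x, Classical.epsilon (fun y => y ∈ D \ C ∧ G.Adj x y)))
    · rintro a ⟨ha, y, hy1, hy2⟩
      have hspec := Classical.epsilon_spec (p := fun y => y ∈ D \ C ∧ G.Adj a y) ⟨y, hy1, hy2⟩
      exact ⟨G.mem_edgeSet.2 hspec.2, a, ha, _, hspec.1, rfl⟩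
    · rintro a ⟨ha, y, hy1, hy2⟩ a' ⟨ha', y', hy1', hy2'⟩ he
      have hs := Classical.epsilon_spec (p := fun y => y ∈ D \ C ∧ G.Adj a' y) ⟨y', hy1', hy2'⟩
      rw [Sym2.eq_iff] at he
      rcases he with ⟨h, -⟩ | ⟨h1, -⟩
      · exact h
      · rw [h1] at ha
        exact absurd ha.1 hs.1.2
  set S := (C ∩ D) ∪ T with hSdef
  have hSC : S ⊆ C := by
    rintro a (h | h)
    exacts [h.1, (hTC h).1]
  have hScard : S.ncard ≤ 2 := by
    have h := Set.ncard_union_le (C ∩ D) T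
    rw [← hSdef] at h
    omega
  by_cases hrest : ((C \ D) \ S).Nonempty
  · obtain ⟨c, hcC, hcS⟩ := hrest
    obtain ⟨d, hdD, hdC⟩ := hm.2.2
    have hdS : d ∉ S := fun h => hdC (hSC h)
    obtain ⟨p, hp⟩ := exists_walk_avoid h3 hScard hcS hdS
    obtain ⟨u, u', hadj, hu, hu', hus, hu's⟩ :=
      walk_cross (X := C \ D) p hcC (fun h => hdC h.1)
    have huS := hp u hus
    have hu'S := hp u' hu's
    have hu'D : u' ∈ D \ C := by
      have hu'CD : u' ∉ C ∩ D := fun h => hu'S (Or.inl h)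
      by_cases h : u' ∈ C
      · exact absurd ⟨h, fun hD => hu'CD ⟨h, hD⟩⟩ hu'
      · exact ⟨mem_of_union_univ hm.1 h, h⟩
    exact huS (Or.inr ⟨hu, u', hu'D, hadj⟩)
  · -- C \ D ⊆ S, hence C \ D ⊆ T, so C \ D = T
    have hCT : C \ D ⊆ T := by
      intro a ha
      by_cases h : a ∈ T
      · exact h
      · exfalso
        have hmem : a ∈ (C \ D) \ S := by
          refine ⟨ha, fun hS => ?_⟩
          rcases hS with h' | h'
          · exact ha.2 h'.2
          · exact h h'
        rw [Set.not_nonempty_iff_eq_empty.mp hrest] at hmem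
        exact hmem
    have hTeq : C \ D = T := Set.Subset.antisymm hCT hTC
    have hCDm : (C \ D).ncard ≤ (sepEdges G C D).ncard := hTeq ▸ hTm
    have hdegb : ∀ a ∈ C \ D, 3 ≤ ((C \ D).ncard - 1) + (C ∩ D).ncard
        + (G.neighborSet a ∩ (D \ C)).ncard := by
      intro a ha
      have hdeg := three_le_deg h3 a
      rw [ncard_split hm.1 (G.neighborSet a)] at hdeg
      have h1 : (G.neighborSet a ∩ (C ∩ D)).ncard ≤ (C ∩ D).ncard :=
        Set.ncard_le_ncard Set.inter_subset_right (Set.toFinite _)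
      have h2 : (G.neighborSet a ∩ (C \ D)).ncard ≤ (C \ D).ncard - 1 := by
        have hsub : G.neighborSet a ∩ (C \ D) ⊆ (C \ D) \ {a} := by
          rintro b ⟨hb1, hb2⟩
          exact ⟨hb2, fun h => G.notMem_neighborSet_self (h ▸ hb1 : a ∈ G.neighborSet a)⟩
        have := Set.ncard_le_ncard hsub (Set.toFinite _)
        have hd := Set.ncard_diff_singleton_le (C \ D) a
        have hmem : ((C \ D) \ {a}).ncard = (C \ D).ncard - 1 :=
          Set.ncard_diff_singleton_of_mem ha
        omega
      omega
    obtain ⟨x, hx⟩ := hm.2.1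
    have hCD1 : 1 ≤ (C \ D).ncard := (Set.ncard_pos (Set.toFinite _)).2 ⟨x, hx⟩
    have hex : (G.neighborSet x ∩ (D \ C)).ncard ≤ (sepEdges G C D).ncard := by
      rw [← edges_at_ncard (G := G) hx]
      exact Set.ncard_le_ncard (edges_at_subset hx) (Set.toFinite _)
    by_cases h1 : (C \ D).ncard = 1
    · have := hdegb x hx
      omega
    · -- (C\D).ncard = 2, C∩D empty, m = 2
      have h2 : (C \ D).ncard = 2 := by omega
      obtain ⟨x₁, x₂, hne, hxeq⟩ := Set.ncard_eq_two.mp h2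
      have hx₁ : x₁ ∈ C \ D := by rw [hxeq]; exact Or.inl rfl
      have hx₂ : x₂ ∈ C \ D := by rw [hxeq]; exact Or.inr rfl
      have hb₁ := hdegb x₁ hx₁
      have hb₂ := hdegb x₂ hx₂
      have hCD0 : (C ∩ D).ncard = 0 := by omega
      have hdisj : Disjoint ((fun y => s(x₁, y)) '' (G.neighborSet x₁ ∩ (D \ C)))
          ((fun y => s(x₂, y)) '' (G.neighborSet x₂ ∩ (D \ C))) := by
        rw [Set.disjoint_left]
        rintro e ⟨y, ⟨-, hy⟩, rfl⟩ ⟨y', ⟨-, hy'⟩, he⟩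
        rw [Sym2.eq_iff] at he
        rcases he with ⟨h, -⟩ | ⟨ha, hb⟩
        · exact hne (h.symm)
        · rw [hb] at hy'; exact hy'.2 hx₁.1
      have hsubU : ((fun y => s(x₁, y)) '' (G.neighborSet x₁ ∩ (D \ C)))
          ∪ ((fun y => s(x₂, y)) '' (G.neighborSet x₂ ∩ (D \ C))) ⊆ sepEdges G C D :=
        Set.union_subset (edges_at_subset hx₁) (edges_at_subset hx₂)
      have hUcard := Set.ncard_union_eq hdisj (Set.toFinite _) (Set.toFinite _)
      have hle := Set.ncard_le_ncard hsubU (Set.toFinite _)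
      rw [hUcard, edges_at_ncard (G := G) hx₁, edges_at_ncard (G := G) hx₂] at hle
      omega

end F2


section Shift

variable {G : SimpleGraph V} {A B C D S X : Set V} {b c d v w x y z : V}

lemma not_mem_sepEdges_of_sep (hv : v ∈ C ∩ D) (c' : V) :
    s(v, c') ∉ sepEdges G C D := by
  rintro ⟨he, x, hx, y, hy, heq⟩
  have hmem : v ∈ s(x, y) := heq ▸ Sym2.mem_mk_left v c'
  rw [Sym2.mem_iff] at hmem
  rcases hmem with rfl | rfl
  · exact hx.2 hv.2
  · exact hy.2 hv.1

lemma sepEdges_sdiff (hS : S ⊆ C ∩ D) :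
    sepEdges G C (D \ S) = sepEdges G C D
      ∪ {e | ∃ u ∈ S, ∃ y ∈ D \ C, G.Adj u y ∧ e = s(u, y)} := by
  ext e
  constructor
  · rintro ⟨he, x, ⟨hxC, hxD⟩, y, ⟨⟨hyD, hyS⟩, hyC⟩, rfl⟩
    by_cases hxmem : x ∈ D
    · have hxS : x ∈ S := by
        by_contra h
        exact hxD ⟨hxmem, h⟩
      exact Or.inr ⟨x, hxS, y, ⟨hyD, hyC⟩, G.mem_edgeSet.1 he, rfl⟩
    · exact Or.inl ⟨he, x, ⟨hxC, hxmem⟩, y, ⟨hyD, hyC⟩, rfl⟩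
  · rintro (⟨he, x, ⟨hxC, hxD⟩, y, ⟨hyD, hyC⟩, rfl⟩ | ⟨u, huS, y, ⟨hyD, hyC⟩, hadj, rfl⟩)
    · exact ⟨he, x, ⟨hxC, fun h => hxD h.1⟩, y,
        ⟨⟨hyD, fun h => hyC (hS h).1⟩, hyC⟩, rfl⟩
    · exact ⟨G.mem_edgeSet.2 hadj, u, ⟨(hS huS).1, fun h => h.2 huS⟩, y,
        ⟨⟨hyD, fun h => hyC (hS h).1⟩, hyC⟩, rfl⟩

lemma mixed_sdiff (hCD : MixedSep G C D) (hS : S ⊆ C ∩ D) : MixedSep G C (D \ S) := by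
  refine ⟨?_, ?_, ?_⟩
  · rw [Set.eq_univ_iff_forall]
    intro a
    have h := Set.eq_univ_iff_forall.mp hCD.1 a
    rw [Set.mem_union] at h
    rcases h with h | h
    · exact Or.inl h
    · by_cases hc : a ∈ C
      · exact Or.inl hc
      · exact Or.inr ⟨h, fun hs => hc (hS hs).1⟩
  · obtain ⟨e, he⟩ := hCD.2.1
    exact ⟨e, he.1, fun h => he.2 h.1⟩
  · obtain ⟨e, he⟩ := hCD.2.2
    exact ⟨e, ⟨he.1, fun h => he.2 (hS h).1⟩, he.2⟩

lemma sep_inter_sdiff : C ∩ (D \ S) = (C ∩ D) \ S := by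
  ext a; simp only [Set.mem_inter_iff, Set.mem_diff]; tauto

lemma q_pos (h3 : KConnected 3 G) (hCD : TriSep G C D) (hv : v ∈ C ∩ D) :
    (G.neighborSet v ∩ (D \ C)).Nonempty := by
  by_contra hemp
  rw [Set.not_nonempty_iff_eq_empty] at hemp
  have hSsub : ({v} : Set V) ⊆ C ∩ D := by simpa using hv
  have hedges : sepEdges G C (D \ {v}) = sepEdges G C D := by
    rw [sepEdges_sdiff hSsub]
    have : {e | ∃ u ∈ ({v} : Set V), ∃ y ∈ D \ C, G.Adj u y ∧ e = s(u, y)} = ∅ := by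
      ext e
      simp only [Set.mem_singleton_iff, Set.mem_setOf_eq, Set.mem_empty_iff_false, iff_false]
      rintro ⟨u, rfl, y, hy, hadj, rfl⟩
      have : y ∈ G.neighborSet u ∩ (D \ C) := ⟨hadj, hy⟩
      rw [hemp] at this
      exact this
    rw [this, Set.union_empty]
  have hmix : MixedSep G C (D \ {v}) := mixed_sdiff hCD.1.1 hSsub
  have horder := mixed_order_ge h3 hmix
  rw [sepOrder_eq, hedges, sep_inter_sdiff,
    Set.ncard_diff_singleton_of_mem (by exact hv)] at horder
  have h1 : 1 ≤ (C ∩ D).ncard := (Set.ncard_pos (Set.toFinite _)).2 ⟨v, hv⟩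
  have h := hCD.1.2
  rw [sepOrder_eq] at h
  omega

lemma nbhd_struct (h3 : KConnected 3 G) (hCD : TriSep G C D) (hv : v ∈ C ∩ D)
    (hdeg : (G.neighborSet v).ncard = 3) :
    ∃ w₀ a b, G.neighborSet v ∩ (C ∩ D) = {w₀} ∧ G.neighborSet v ∩ (C \ D) = {a} ∧
      G.neighborSet v ∩ (D \ C) = {b} := by
  have huniv := hCD.1.1.1
  have hsplit := ncard_split huniv (G.neighborSet v)
  rw [hdeg] at hsplit
  -- q ≥ 1
  obtain ⟨b, hb⟩ := q_pos h3 hCD hv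
  have hq : 1 ≤ (G.neighborSet v ∩ (D \ C)).ncard := (Set.ncard_pos (Set.toFinite _)).2 ⟨b, hb⟩
  -- p ≥ 1 via symmetry
  obtain ⟨a, ha⟩ := q_pos h3 hCD.symm (by rwa [Set.inter_comm])
  have hp : 1 ≤ (G.neighborSet v ∩ (C \ D)).ncard := (Set.ncard_pos (Set.toFinite _)).2 ⟨a, ha⟩
  -- k ≥ 1
  have hNC : 2 ≤ (G.neighborSet v ∩ C).ncard := (hCD.2 v hv).1
  have hND : 2 ≤ (G.neighborSet v ∩ D).ncard := (hCD.2 v hv).2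
  have hsplitC : (G.neighborSet v ∩ C).ncard
      = (G.neighborSet v ∩ (C ∩ D)).ncard + (G.neighborSet v ∩ (C \ D)).ncard := by
    have hdisj : Disjoint (G.neighborSet v ∩ (C ∩ D)) (G.neighborSet v ∩ (C \ D)) := by
      rw [Set.disjoint_left]; rintro u ⟨-, -, h⟩ ⟨-, -, h'⟩; exact h' h
    have hun : G.neighborSet v ∩ C
        = (G.neighborSet v ∩ (C ∩ D)) ∪ (G.neighborSet v ∩ (C \ D)) := by
      ext u
      simp only [Set.mem_inter_iff, Set.mem_union, Set.mem_diff]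
      have := Set.eq_univ_iff_forall.mp huniv u
      rw [Set.mem_union] at this
      tauto
    rw [hun, Set.ncard_union_eq hdisj (Set.toFinite _) (Set.toFinite _)]
  have hsplitD : (G.neighborSet v ∩ D).ncard
      = (G.neighborSet v ∩ (C ∩ D)).ncard + (G.neighborSet v ∩ (D \ C)).ncard := by
    have hdisj : Disjoint (G.neighborSet v ∩ (C ∩ D)) (G.neighborSet v ∩ (D \ C)) := by
      rw [Set.disjoint_left]; rintro u ⟨-, h, -⟩ ⟨-, -, h'⟩; exact h' h
    have hun : G.neighborSet v ∩ D
        = (G.neighborSet v ∩ (C ∩ D)) ∪ (G.neighborSet v ∩ (D \ C)) := by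
      ext u
      simp only [Set.mem_inter_iff, Set.mem_union, Set.mem_diff]
      have := Set.eq_univ_iff_forall.mp huniv u
      rw [Set.mem_union] at this
      tauto
    rw [hun, Set.ncard_union_eq hdisj (Set.toFinite _) (Set.toFinite _)]
  have hk : 1 ≤ (G.neighborSet v ∩ (C ∩ D)).ncard := by omega
  have hkeq : (G.neighborSet v ∩ (C ∩ D)).ncard = 1 := by omega
  have hpeq : (G.neighborSet v ∩ (C \ D)).ncard = 1 := by omega
  have hqeq : (G.neighborSet v ∩ (D \ C)).ncard = 1 := by omega
  obtain ⟨w₀, hw₀⟩ := Set.ncard_eq_one.mp hkeq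
  obtain ⟨a', ha'⟩ := Set.ncard_eq_one.mp hpeq
  obtain ⟨b', hb'⟩ := Set.ncard_eq_one.mp hqeq
  exact ⟨w₀, a', b', hw₀, ha', hb'⟩

lemma order_bound (hAB : TriSep G A B) {U : Set V} {E : Set (Sym2 V)}
    (hU : U ⊆ A ∩ B) (hE : E ⊆ sepEdges G A B) : U.ncard + E.ncard ≤ 3 := by
  have h := hAB.1.2
  rw [sepOrder_eq] at h
  have h1 := Set.ncard_le_ncard hU (Set.toFinite _)
  have h2 := Set.ncard_le_ncard hE (Set.toFinite _)
  omega

end Shift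


section ShiftTwo

variable {G : SimpleGraph V} {A B C D S X : Set V} {a b c d v w x y z : V}

lemma tri_shift_one (hCD : TriSep G C D) (hv : v ∈ C ∩ D)
    (hb : G.neighborSet v ∩ (D \ C) = {b})
    (hcond : ∀ u ∈ (C ∩ D) \ {v}, 2 ≤ (G.neighborSet u ∩ (D \ {v})).ncard) :
    TriSep G C (D \ {v}) := by
  have hSsub : ({v} : Set V) ⊆ C ∩ D := by simpa using hv
  have hedges : sepEdges G C (D \ {v}) = insert s(v, b) (sepEdges G C D) := by
    rw [sepEdges_sdiff hSsub]
    have hnew : {e | ∃ u ∈ ({v} : Set V), ∃ y ∈ D \ C, G.Adj u y ∧ e = s(u, y)}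
        = {s(v, b)} := by
      ext e
      simp only [Set.mem_singleton_iff, Set.mem_setOf_eq]
      constructor
      · rintro ⟨u, rfl, y, hy, hadj, rfl⟩
        have : y ∈ G.neighborSet u ∩ (D \ C) := ⟨hadj, hy⟩
        rw [hb, Set.mem_singleton_iff] at this
        rw [this]
      · rintro rfl
        have hbmem : b ∈ G.neighborSet v ∩ (D \ C) := by rw [hb]; rfl
        exact ⟨v, rfl, b, hbmem.2, hbmem.1, rfl⟩
    rw [hnew, Set.union_singleton]
  refine ⟨⟨mixed_sdiff hCD.1.1 hSsub, ?_⟩, ?_⟩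
  · rw [sepOrder_eq, sep_inter_sdiff, hedges,
      Set.ncard_insert_of_notMem (not_mem_sepEdges_of_sep hv b) (Set.toFinite _),
      Set.ncard_diff_singleton_of_mem hv]
    have h := hCD.1.2
    rw [sepOrder_eq] at h
    have h1 : 1 ≤ (C ∩ D).ncard := (Set.ncard_pos (Set.toFinite _)).2 ⟨v, hv⟩
    omega
  · intro u hu
    rw [sep_inter_sdiff] at hu
    exact ⟨(hCD.2 u hu.1).1, hcond u hu⟩

lemma tri_shift_two (hCD : TriSep G C D) (hv : v ∈ C ∩ D) (hw : w ∈ C ∩ D) (hvw : v ≠ w)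
    (hbv : G.neighborSet v ∩ (D \ C) = {b}) (hbw : G.neighborSet w ∩ (D \ C) = {d})
    (hcond : ∀ u ∈ (C ∩ D) \ {v, w}, 2 ≤ (G.neighborSet u ∩ (D \ {v, w})).ncard) :
    TriSep G C (D \ {v, w}) := by
  have hSsub : ({v, w} : Set V) ⊆ C ∩ D := by
    intro u hu
    rcases hu with rfl | rfl
    exacts [hv, hw]
  have hdmem : d ∈ D \ C := by
    have : d ∈ G.neighborSet w ∩ (D \ C) := by rw [hbw]; rfl
    exact this.2
  have hedges : sepEdges G C (D \ {v, w})
      = insert s(v, b) (insert s(w, d) (sepEdges G C D)) := by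
    rw [sepEdges_sdiff hSsub]
    have hnew : {e | ∃ u ∈ ({v, w} : Set V), ∃ y ∈ D \ C, G.Adj u y ∧ e = s(u, y)}
        = {s(v, b), s(w, d)} := by
      ext e
      simp only [Set.mem_setOf_eq, Set.mem_insert_iff, Set.mem_singleton_iff]
      constructor
      · rintro ⟨u, hu, y, hy, hadj, rfl⟩
        rcases hu with rfl | rfl
        · have : y ∈ G.neighborSet u ∩ (D \ C) := ⟨hadj, hy⟩
          rw [hbv, Set.mem_singleton_iff] at this
          rw [this]; exact Or.inl rfl
        · have : y ∈ G.neighborSet u ∩ (D \ C) := ⟨hadj, hy⟩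
          rw [hbw, Set.mem_singleton_iff] at this
          rw [this]; exact Or.inr rfl
      · rintro (rfl | rfl)
        · have hbmem : b ∈ G.neighborSet v ∩ (D \ C) := by rw [hbv]; rfl
          exact ⟨v, Or.inl rfl, b, hbmem.2, hbmem.1, rfl⟩
        · have hdm : d ∈ G.neighborSet w ∩ (D \ C) := by rw [hbw]; rfl
          exact ⟨w, Or.inr rfl, d, hdm.2, hdm.1, rfl⟩
    rw [hnew]
    ext e
    simp only [Set.mem_union, Set.mem_insert_iff, Set.mem_singleton_iff]
    tauto
  refine ⟨⟨mixed_sdiff hCD.1.1 hSsub, ?_⟩, ?_⟩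
  · have hne1 : s(v, b) ∉ insert s(w, d) (sepEdges G C D) := by
      intro h
      rcases h with h | h
      · exact sym2_ne hvw (fun hvd => (hvd ▸ hdmem.2 : v ∉ C) hv.1) h
      · exact not_mem_sepEdges_of_sep hv b h
    rw [sepOrder_eq, sep_inter_sdiff, hedges,
      Set.ncard_insert_of_notMem hne1 (Set.toFinite _),
      Set.ncard_insert_of_notMem (not_mem_sepEdges_of_sep hw d) (Set.toFinite _),
      Set.ncard_diff hSsub (Set.toFinite _), Set.ncard_pair hvw]
    have h := hCD.1.2
    rw [sepOrder_eq] at h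
    have h2 : 2 ≤ (C ∩ D).ncard := by
      have := Set.ncard_le_ncard hSsub (Set.toFinite _)
      rw [Set.ncard_pair hvw] at this
      omega
    omega
  · intro u hu
    rw [sep_inter_sdiff] at hu
    exact ⟨(hCD.2 u hu.1).1, hcond u hu⟩

end ShiftTwo


section Small

variable {G : SimpleGraph V} {A B C D S X : Set V} {a b c d v w x y z : V}

lemma sym2_ne' (h1 : y ≠ z) (h2 : y ≠ w) : s(x, y) ≠ s(z, w) := by
  intro h
  have hy : y ∈ s(z, w) := h ▸ Sym2.mem_mk_right x y
  rw [Sym2.mem_iff] at hy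
  tauto

lemma ncard_triple {α : Type*} {e1 e2 e3 : α} (h12 : e1 ≠ e2) (h13 : e1 ≠ e3)
    (h23 : e2 ≠ e3) : ({e1, e2, e3} : Set α).ncard = 3 := by
  rw [Set.ncard_insert_of_notMem (by simp [h12, h13]) (Set.toFinite _), Set.ncard_pair h23]

lemma ncard_quad {α : Type*} {e1 e2 e3 e4 : α} (h12 : e1 ≠ e2) (h13 : e1 ≠ e3)
    (h14 : e1 ≠ e4) (h23 : e2 ≠ e3) (h24 : e2 ≠ e4) (h34 : e3 ≠ e4) :
    ({e1, e2, e3, e4} : Set α).ncard = 4 := by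
  rw [Set.ncard_insert_of_notMem (by simp [h12, h13, h14]) (Set.toFinite _),
    ncard_triple h23 h24 h34]

lemma small_side (h3 : KConnected 3 G) (hAB : TriSep G A B) (hABs : StrongSep G A B)
    (hcyc : HasCycleIn G A) (hCD : TriSep G C D) (hv : v ∈ C ∩ D)
    (hdeg : (G.neighborSet v).ncard = 3) (hsub : A ⊆ C ∩ D) : False := by
  have hunivAB := hAB.1.1.1
  have hA3 : 3 ≤ A.ncard := hcyc.three_le_ncard
  have hCD3 : (C ∩ D).ncard ≤ 3 := by
    have h := hCD.1.2
    rw [sepOrder_eq] at h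
    omega
  have hAeq : A = C ∩ D := Set.eq_of_subset_of_ncard_le hsub (by omega) (Set.toFinite _)
  have hvA : v ∈ A := hAeq ▸ hv
  have hvB : v ∉ B := by
    intro hvB
    have := hABs v ⟨hvA, hvB⟩
    omega
  obtain ⟨w₀, a, b, hw₀, ha, hb⟩ := nbhd_struct h3 hCD hv hdeg
  have haP : a ∈ G.neighborSet v ∩ (C \ D) := by rw [ha]; rfl
  have hbP : b ∈ G.neighborSet v ∩ (D \ C) := by rw [hb]; rfl
  have haA : a ∉ A := by rw [hAeq]; exact fun h => haP.2.2 h.2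
  have hbA : b ∉ A := by rw [hAeq]; exact fun h => hbP.2.2 h.1
  have haB : a ∈ B \ A := ⟨mem_of_union_univ hunivAB haA, haA⟩
  have hbB : b ∈ B \ A := ⟨mem_of_union_univ hunivAB hbA, hbA⟩
  have heva : s(v, a) ∈ sepEdges G A B := mem_sepEdges_intro haP.1 ⟨hvA, hvB⟩ haB
  have hevb : s(v, b) ∈ sepEdges G A B := mem_sepEdges_intro hbP.1 ⟨hvA, hvB⟩ hbB
  have hab : a ≠ b := fun h => haP.2.2 (h ▸ hbP.2.1)
  have hneab : s(v, a) ≠ s(v, b) :=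
    sym2_ne' (fun h => haP.2.2 (by rw [h]; exact hv.2)) hab
  -- the two other separator vertices
  have hAcard : A.ncard = 3 := by
    have := Set.ncard_le_ncard hsub (Set.toFinite _)
    omega
  have hW2 : (A \ {v}).ncard = 2 := by
    rw [Set.ncard_diff_singleton_of_mem hvA]
    omega
  obtain ⟨w₁, w₂, hw12, hWeq⟩ := Set.ncard_eq_two.mp hW2
  have hw₁A : w₁ ∈ A \ {v} := by rw [hWeq]; exact Or.inl rfl
  have hw₂A : w₂ ∈ A \ {v} := by rw [hWeq]; exact Or.inr rfl
  -- each wᵢ has a neighbour outside A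
  have hout : ∀ u, u ∈ A \ {v} → ∃ y', y' ∈ B \ A ∧ G.Adj u y' := by
    intro u hu
    have hdegu := three_le_deg h3 u
    have hsplitu := Set.ncard_inter_add_ncard_diff_eq_ncard (G.neighborSet u) A
      (Set.toFinite _)
    have hNA : (G.neighborSet u ∩ A).ncard ≤ 2 := by
      have hs : G.neighborSet u ∩ A ⊆ A \ {u} := by
        rintro t ⟨ht1, ht2⟩
        exact ⟨ht2, fun h => G.notMem_neighborSet_self (h ▸ ht1 : u ∈ G.neighborSet u)⟩
      have h1 := Set.ncard_le_ncard hs (Set.toFinite _)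
      have h2 : (A \ {u}).ncard = A.ncard - 1 :=
        Set.ncard_diff_singleton_of_mem hu.1
      omega
    have hpos : 0 < (G.neighborSet u \ A).ncard := by omega
    obtain ⟨y', hy'⟩ := (Set.ncard_pos (Set.toFinite _)).1 hpos
    exact ⟨y', ⟨mem_of_union_univ hunivAB hy'.2, hy'.2⟩, hy'.1⟩
  obtain ⟨y₁, hy₁B, hy₁adj⟩ := hout w₁ hw₁A
  obtain ⟨y₂, hy₂B, hy₂adj⟩ := hout w₂ hw₂A
  have hw₁v : w₁ ≠ v := fun h => hw₁A.2 (by simp [h])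
  have hw₂v : w₂ ≠ v := fun h => hw₂A.2 (by simp [h])
  have hw₁a : w₁ ≠ a := fun h => haA (h ▸ hw₁A.1)
  have hw₂a : w₂ ≠ a := fun h => haA (h ▸ hw₂A.1)
  have hw₁b : w₁ ≠ b := fun h => hbA (h ▸ hw₁A.1)
  have hw₂b : w₂ ≠ b := fun h => hbA (h ▸ hw₂A.1)
  have hw₁y₂ : w₁ ≠ y₂ := fun h => hy₂B.2 (h ▸ hw₁A.1)
  have hvy₁ : v ≠ y₁ := fun h => hy₁B.2 (h ▸ hvA)
  have hvy₂ : v ≠ y₂ := fun h => hy₂B.2 (h ▸ hvA)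
  have hne_a1 : s(v, a) ≠ s(w₁, y₁) := sym2_ne hw₁v.symm hvy₁
  have hne_a2 : s(v, a) ≠ s(w₂, y₂) := sym2_ne hw₂v.symm hvy₂
  have hne_b1 : s(v, b) ≠ s(w₁, y₁) := sym2_ne hw₁v.symm hvy₁
  have hne_b2 : s(v, b) ≠ s(w₂, y₂) := sym2_ne hw₂v.symm hvy₂
  have hne_12 : s(w₁, y₁) ≠ s(w₂, y₂) := sym2_ne hw12 hw₁y₂
  by_cases hw₁B : w₁ ∈ B <;> by_cases hw₂B : w₂ ∈ B
  · have hbound := order_bound hAB (U := {w₁, w₂}) (E := {s(v, a), s(v, b)})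
      (by rintro u (rfl | rfl); exacts [⟨hw₁A.1, hw₁B⟩, ⟨hw₂A.1, hw₂B⟩])
      (by rintro e (rfl | rfl); exacts [heva, hevb])
    rw [Set.ncard_pair hw12, Set.ncard_pair hneab] at hbound
    omega
  · have hev2 : s(w₂, y₂) ∈ sepEdges G A B :=
      mem_sepEdges_intro hy₂adj ⟨hw₂A.1, hw₂B⟩ hy₂B
    have hbound := order_bound hAB (U := {w₁}) (E := {s(v, a), s(v, b), s(w₂, y₂)})
      (by rintro u rfl; exact ⟨hw₁A.1, hw₁B⟩)
      (by rintro e (rfl | rfl | rfl); exacts [heva, hevb, hev2])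
    rw [Set.ncard_singleton, ncard_triple hneab hne_a2 hne_b2] at hbound
    omega
  · have hev1 : s(w₁, y₁) ∈ sepEdges G A B :=
      mem_sepEdges_intro hy₁adj ⟨hw₁A.1, hw₁B⟩ hy₁B
    have hbound := order_bound hAB (U := {w₂}) (E := {s(v, a), s(v, b), s(w₁, y₁)})
      (by rintro u rfl; exact ⟨hw₂A.1, hw₂B⟩)
      (by rintro e (rfl | rfl | rfl); exacts [heva, hevb, hev1])
    rw [Set.ncard_singleton, ncard_triple hneab hne_a1 hne_b1] at hbound
    omega
  · have hev1 : s(w₁, y₁) ∈ sepEdges G A B :=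
      mem_sepEdges_intro hy₁adj ⟨hw₁A.1, hw₁B⟩ hy₁B
    have hev2 : s(w₂, y₂) ∈ sepEdges G A B :=
      mem_sepEdges_intro hy₂adj ⟨hw₂A.1, hw₂B⟩ hy₂B
    have hbound := order_bound hAB (U := (∅ : Set V))
      (E := {s(v, a), s(v, b), s(w₁, y₁), s(w₂, y₂)})
      (by rintro u h; exact absurd h (Set.notMem_empty u))
      (by rintro e (rfl | rfl | rfl | rfl); exacts [heva, hevb, hev1, hev2])
    rw [Set.ncard_empty, ncard_quad hneab hne_a1 hne_a2 hne_b1 hne_b2 hne_12] at hbound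
    omega

end Small


section Acyclic

variable {G : SimpleGraph V} {A B C D N : Set V} {a b c d v w x y z : V}

lemma ncard_split2 (huniv : C ∪ D = Set.univ) (N : Set V) :
    N.ncard = (N ∩ C).ncard + (N ∩ (D \ C)).ncard := by
  have hsplit : N = (N ∩ C) ∪ (N ∩ (D \ C)) := by
    ext t
    simp only [Set.mem_union, Set.mem_inter_iff, Set.mem_diff]
    have := Set.eq_univ_iff_forall.mp huniv t
    rw [Set.mem_union] at this
    tauto
  nth_rewrite 1 [hsplit]
  rw [Set.ncard_union_eq ?_ (Set.toFinite _) (Set.toFinite _)]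
  rw [Set.disjoint_left]
  rintro t ⟨-, ht⟩ ⟨-, -, ht'⟩
  exact ht' ht

lemma acyclic_side (h3 : KConnected 3 G) (hCD : TriSep G C D) (hnc : ¬ HasCycleIn G C) :
    ∃ z, C = {z} ∧ D = {z}ᶜ ∧ (G.neighborSet z).ncard = 3 := by
  classical
  have huniv := hCD.1.1.1
  obtain ⟨z₀, hz₀⟩ := hCD.1.1.2.1
  set n := Fintype.card V with hn
  set P : ℕ → Prop := fun k => ∃ (c' d' : V) (p : G.Walk c' d'),
    p.IsPath ∧ (∀ x ∈ p.support, x ∈ C) ∧ p.length = k with hPdef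
  have hP0 : P 0 := ⟨z₀, z₀, SimpleGraph.Walk.nil, SimpleGraph.Walk.IsPath.nil,
    by intro x hx; simp only [SimpleGraph.Walk.support_nil, List.mem_singleton] at hx;
       exact hx ▸ hz₀.1, rfl⟩
  set k₀ := Nat.findGreatest P n with hk₀def
  have hPk₀ : P k₀ := Nat.findGreatest_spec (Nat.zero_le n) hP0
  have hmax : ∀ k, k₀ < k → k ≤ n → ¬P k := fun k h1 h2 => Nat.findGreatest_is_greatest h1 h2
  -- endpoint bound
  have hend : ∀ (u' w' : V) (q : G.Walk u' w'), q.IsPath → (∀ x ∈ q.support, x ∈ C) →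
      q.length = k₀ → (G.neighborSet u' ∩ C).ncard ≤ 1 := by
    intro u' w' q hq hqs hql
    by_contra hgt
    push_neg at hgt
    have hsub : ∀ x, x ∈ G.neighborSet u' ∩ C → x ∈ q.support := by
      intro x ⟨hxN, hxC⟩
      by_contra hxs
      have hpath : (SimpleGraph.Walk.cons hxN.symm q).IsPath := by
        rw [SimpleGraph.Walk.cons_isPath_iff]
        exact ⟨hq, hxs⟩
      have hPnew : P (k₀ + 1) := ⟨x, w', SimpleGraph.Walk.cons hxN.symm q, hpath,
        by intro t ht
           rw [SimpleGraph.Walk.support_cons, List.mem_cons] at ht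
           rcases ht with rfl | ht
           exacts [hxC, hqs t ht],
        by rw [SimpleGraph.Walk.length_cons, hql]⟩
      have hlt := hpath.length_lt
      rw [SimpleGraph.Walk.length_cons, hql] at hlt
      exact hmax (k₀ + 1) (Nat.lt_succ_self k₀) (by omega) hPnew
    obtain ⟨x₁, hx₁, x₂, hx₂, hx12⟩ := (Set.one_lt_ncard (Set.toFinite _)).1 hgt
    cases q with
    | nil =>
      have := hsub x₁ hx₁
      simp only [SimpleGraph.Walk.support_nil, List.mem_singleton] at this
      exact hx₁.1.ne' (by rw [this])
    | cons h' q' =>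
      rename_i v₁
      have hq' := (SimpleGraph.Walk.cons_isPath_iff h' q').mp hq
      have hbuild : ∀ x, x ∈ G.neighborSet u' ∩ C → x ≠ v₁ → False := by
        intro x hx hxv
        have hxsup : x ∈ (SimpleGraph.Walk.cons h' q').support := hsub x hx
        have hnotedge : s(u', x) ∉ (SimpleGraph.Walk.cons h' q').edges := by
          intro he
          rw [SimpleGraph.Walk.edges_cons, List.mem_cons] at he
          rcases he with he | he
          · rw [Sym2.eq_iff] at he
            rcases he with ⟨-, h⟩ | ⟨-, h2⟩
            · exact hxv h
            · exact hx.1.ne' h2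
          · exact hq'.2 (SimpleGraph.Walk.fst_mem_support_of_mem_edges q' he)
        set q₁ := (SimpleGraph.Walk.cons h' q').takeUntil x hxsup with hq₁
        have hq₁path : q₁.IsPath := hq.takeUntil hxsup
        have hcyc : (SimpleGraph.Walk.cons ((G.mem_neighborSet u' x).mp (Set.mem_of_mem_inter_left hx)) q₁.reverse).IsCycle := by
          rw [SimpleGraph.Walk.cons_isCycle_iff]
          refine ⟨hq₁path.reverse, ?_⟩
          rw [SimpleGraph.Walk.edges_reverse, List.mem_reverse]
          exact fun he => hnotedge (SimpleGraph.Walk.edges_takeUntil_subset _ hxsup he)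
        apply hnc
        refine ⟨u', SimpleGraph.Walk.cons ((G.mem_neighborSet u' x).mp (Set.mem_of_mem_inter_left hx)) q₁.reverse, hcyc, ?_⟩
        intro t ht
        rw [SimpleGraph.Walk.support_cons, List.mem_cons] at ht
        rcases ht with rfl | ht
        · exact hqs t (SimpleGraph.Walk.start_mem_support _)
        · rw [SimpleGraph.Walk.support_reverse, List.mem_reverse] at ht
          exact hqs t (SimpleGraph.Walk.support_takeUntil_subset _ hxsup ht)
      by_cases hx1v : x₁ = v₁
      · exact hbuild x₂ hx₂ (fun h => hx12 (by rw [hx1v, h]))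
      · exact hbuild x₁ hx₁ hx1v
  obtain ⟨u, w, p, hp, hsup, hlen⟩ := hPk₀
  have horder := hCD.1.2
  rw [sepOrder_eq] at horder
  by_cases hk0 : k₀ = 0
  · -- no edges inside C
    have hnoe : ∀ z' ∈ C, G.neighborSet z' ∩ C = ∅ := by
      intro z' hz'
      rw [Set.eq_empty_iff_forall_notMem]
      rintro t ⟨htN, htC⟩
      have hpath : (SimpleGraph.Walk.cons ((G.mem_neighborSet z' t).mp htN) SimpleGraph.Walk.nil).IsPath := by
        rw [SimpleGraph.Walk.cons_isPath_iff]
        exact ⟨SimpleGraph.Walk.IsPath.nil, by simp [htN.ne]⟩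
      have hP1 : P 1 := ⟨z', t, SimpleGraph.Walk.cons ((G.mem_neighborSet z' t).mp htN) SimpleGraph.Walk.nil, hpath,
        by intro s hs
           rw [SimpleGraph.Walk.support_cons, List.mem_cons] at hs
           rcases hs with rfl | hs
           · exact hz'
           · simp only [SimpleGraph.Walk.support_nil, List.mem_singleton] at hs
             exact hs ▸ htC, rfl⟩
      have hlt := hpath.length_lt
      exact hmax 1 (by omega) (by simp at hlt; omega) hP1
    have hCDe : C ∩ D = ∅ := by
      rw [Set.eq_empty_iff_forall_notMem]
      intro t ht
      have := (hCD.2 t ht).1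
      rw [hnoe t ht.1, Set.ncard_empty] at this
      omega
    have hCDdiff : ∀ z', z' ∈ C → z' ∈ C \ D := by
      intro z' hz'
      exact ⟨hz', fun hD => (Set.eq_empty_iff_forall_notMem.mp hCDe z') ⟨hz', hD⟩⟩
    have hNz : ∀ z', z' ∈ C → G.neighborSet z' ∩ (D \ C) = G.neighborSet z' := by
      intro z' hz'
      apply Set.Subset.antisymm Set.inter_subset_left
      intro t ht
      refine ⟨ht, ?_, fun hC => (Set.eq_empty_iff_forall_notMem.mp (hnoe z' hz') t) ⟨ht, hC⟩⟩
      exact mem_of_union_univ huniv (fun hC => (Set.eq_empty_iff_forall_notMem.mp (hnoe z' hz') t) ⟨ht, hC⟩)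
    have hm3 : (sepEdges G C D).ncard = 3 := by
      rw [hCDe, Set.ncard_empty] at horder
      omega
    have hdegz : ∀ z', z' ∈ C → (G.neighborSet z').ncard = 3 := by
      intro z' hz'
      have hle : (G.neighborSet z' ∩ (D \ C)).ncard ≤ (sepEdges G C D).ncard := by
        rw [← edges_at_ncard (G := G) (hCDdiff z' hz')]
        exact Set.ncard_le_ncard (edges_at_subset (hCDdiff z' hz')) (Set.toFinite _)
      have hge := three_le_deg h3 z'
      rw [hNz z' hz'] at hle
      omega
    have hCsub : C ⊆ {z₀} := by
      intro t ht
      rw [Set.mem_singleton_iff]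
      by_contra htz
      have hdisj : Disjoint ((fun y => s(z₀, y)) '' (G.neighborSet z₀ ∩ (D \ C)))
          ((fun y => s(t, y)) '' (G.neighborSet t ∩ (D \ C))) := by
        rw [Set.disjoint_left]
        rintro e ⟨y, ⟨-, hy⟩, rfl⟩ ⟨y', ⟨-, hy'⟩, he⟩
        rw [Sym2.eq_iff] at he
        rcases he with ⟨h, -⟩ | ⟨ha, hb⟩
        · exact htz h
        · rw [← ha] at hy
          exact hy.2 ht
      have hsubU : ((fun y => s(z₀, y)) '' (G.neighborSet z₀ ∩ (D \ C)))
          ∪ ((fun y => s(t, y)) '' (G.neighborSet t ∩ (D \ C))) ⊆ sepEdges G C D :=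
        Set.union_subset (edges_at_subset hz₀) (edges_at_subset (hCDdiff t ht))
      have hc1 : ((fun y => s(z₀, y)) '' (G.neighborSet z₀ ∩ (D \ C))).ncard = 3 := by
        rw [edges_at_ncard (G := G) hz₀, hNz z₀ hz₀.1, hdegz z₀ hz₀.1]
      have hc2 : ((fun y => s(t, y)) '' (G.neighborSet t ∩ (D \ C))).ncard = 3 := by
        rw [edges_at_ncard (G := G) (hCDdiff t ht), hNz t ht, hdegz t ht]
      have hle := Set.ncard_le_ncard hsubU (Set.toFinite _)
      rw [Set.ncard_union_eq hdisj (Set.toFinite _) (Set.toFinite _), hc1, hc2, hm3] at hle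
      omega
    have hCeq : C = {z₀} := Set.Subset.antisymm hCsub (by simpa using hz₀.1)
    have hDeq : D = {z₀}ᶜ := by
      ext t
      simp only [Set.mem_compl_iff, Set.mem_singleton_iff]
      constructor
      · intro htD h
        exact (Set.eq_empty_iff_forall_notMem.mp hCDe z₀) ⟨hz₀.1, h ▸ htD⟩
      · intro hne
        have := Set.eq_univ_iff_forall.mp huniv t
        rw [Set.mem_union] at this
        rcases this with h | h
        · exact absurd (hCsub h) hne
        · exact h
    exact ⟨z₀, hCeq, hDeq, hdegz z₀ hz₀.1⟩
  · -- a maximum path has positive length: both endpoints lie in C \ D with ≥ 2 sep edges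
    have huw : u ≠ w := by
      intro h
      subst h
      cases p with
      | nil => exact hk0 hlen.symm
      | cons h' q' =>
        exact ((SimpleGraph.Walk.cons_isPath_iff h' q').mp hp).2 q'.end_mem_support
    have huC : u ∈ C := hsup u p.start_mem_support
    have hwC : w ∈ C := hsup w p.end_mem_support
    have hu1 : (G.neighborSet u ∩ C).ncard ≤ 1 := hend u w p hp hsup hlen
    have hw1 : (G.neighborSet w ∩ C).ncard ≤ 1 := by
      refine hend w u p.reverse hp.reverse ?_ ?_
      · intro x hx
        rw [SimpleGraph.Walk.support_reverse, List.mem_reverse] at hx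
        exact hsup x hx
      · rw [SimpleGraph.Walk.length_reverse]
        exact hlen
    have huCD : u ∈ C \ D := by
      refine ⟨huC, fun hD => ?_⟩
      have := (hCD.2 u ⟨huC, hD⟩).1
      omega
    have hwCD : w ∈ C \ D := by
      refine ⟨hwC, fun hD => ?_⟩
      have := (hCD.2 w ⟨hwC, hD⟩).1
      omega
    have hu2 : 2 ≤ (G.neighborSet u ∩ (D \ C)).ncard := by
      have h := three_le_deg h3 u
      rw [ncard_split2 huniv (G.neighborSet u)] at h
      omega
    have hw2 : 2 ≤ (G.neighborSet w ∩ (D \ C)).ncard := by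
      have h := three_le_deg h3 w
      rw [ncard_split2 huniv (G.neighborSet w)] at h
      omega
    exfalso
    have hdisj : Disjoint ((fun y => s(u, y)) '' (G.neighborSet u ∩ (D \ C)))
        ((fun y => s(w, y)) '' (G.neighborSet w ∩ (D \ C))) := by
      rw [Set.disjoint_left]
      rintro e ⟨y, ⟨-, hy⟩, rfl⟩ ⟨y', ⟨-, hy'⟩, he⟩
      rw [Sym2.eq_iff] at he
      rcases he with ⟨h, -⟩ | ⟨ha, hb⟩
      · exact huw h.symm
      · rw [← ha] at hy
        exact hy.2 hwC
    have hsubU : ((fun y => s(u, y)) '' (G.neighborSet u ∩ (D \ C)))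
        ∪ ((fun y => s(w, y)) '' (G.neighborSet w ∩ (D \ C))) ⊆ sepEdges G C D :=
      Set.union_subset (edges_at_subset huCD) (edges_at_subset hwCD)
    have hle := Set.ncard_le_ncard hsubU (Set.toFinite _)
    rw [Set.ncard_union_eq hdisj (Set.toFinite _) (Set.toFinite _),
      edges_at_ncard (G := G) huCD, edges_at_ncard (G := G) hwCD] at hle
    omega

end Acyclic


section InvStruct

variable {G : SimpleGraph V} {A B C D : Set V} {a b c d v w w₀ x y z : V}

lemma missing_single {D B : Set V} {v : V} (hsub : D \ {v} ⊆ B) (hnsub : ¬ D ⊆ B) :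
    v ∉ B := by
  intro hvB
  apply hnsub
  intro t ht
  by_cases h : t = v
  · exact h ▸ hvB
  · exact hsub ⟨ht, h⟩

lemma missing_pair {D B : Set V} {v w : V} (hsub : D \ {v, w} ⊆ B) (hnsub : ¬ D ⊆ B) :
    v ∉ B ∨ w ∉ B := by
  by_contra h
  push_neg at h
  apply hnsub
  intro t ht
  by_cases h1 : t = v
  · exact h1 ▸ h.1
  · by_cases h2 : t = w
    · exact h2 ▸ h.2
    · exact hsub ⟨ht, by simp [h1, h2]⟩

lemma sep_sdiff_inter {C D S : Set V} : (C \ S) ∩ D = (C ∩ D) \ S := by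
  ext t; simp only [Set.mem_inter_iff, Set.mem_diff]; tauto

lemma inv_struct (h3 : KConnected 3 G) (hCD : TriSep G C D) (hv : v ∈ C ∩ D)
    (hw₀ : G.neighborSet v ∩ (C ∩ D) = {w₀})
    (hfail : ¬ ∀ u ∈ (C ∩ D) \ {v}, 2 ≤ (G.neighborSet u ∩ (D \ {v})).ncard) :
    w₀ ∈ (C ∩ D) \ {v} ∧ (∃ d₀, d₀ ∈ D \ C ∧ G.Adj w₀ d₀ ∧
      G.neighborSet w₀ ∩ (D \ C) = {d₀} ∧ G.neighborSet w₀ ∩ D = {v, d₀}) ∧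
      (∀ u ∈ (C ∩ D) \ {v, w₀}, 2 ≤ (G.neighborSet u ∩ (D \ {v, w₀})).ncard) := by
  push_neg at hfail
  obtain ⟨u₀, hu₀mem, hu₀card⟩ := hfail
  have hw₀mem : w₀ ∈ G.neighborSet v ∩ (C ∩ D) := by rw [hw₀]; rfl
  have hvN : v ∈ G.neighborSet u₀ := by
    by_contra hvN
    have heq : G.neighborSet u₀ ∩ (D \ {v}) = G.neighborSet u₀ ∩ D := by
      apply Set.Subset.antisymm
      · rintro t ⟨h1, h2⟩; exact ⟨h1, h2.1⟩
      · rintro t ⟨h1, h2⟩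
        refine ⟨h1, h2, fun h => ?_⟩
        rw [h] at h1
        exact hvN h1
    rw [heq] at hu₀card
    have := (hCD.2 u₀ hu₀mem.1).2
    omega
  have hu₀w : u₀ = w₀ := by
    have : u₀ ∈ G.neighborSet v ∩ (C ∩ D) := ⟨hvN.symm, hu₀mem.1⟩
    rw [hw₀] at this
    exact this
  rw [hu₀w] at hu₀mem hu₀card hvN
  have hwv : w₀ ≠ v := hu₀mem.2
  have hd1 : 1 ≤ (G.neighborSet w₀ ∩ (D \ {v})).ncard := by
    have h2 := (hCD.2 w₀ hu₀mem.1).2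
    have hsub : G.neighborSet w₀ ∩ D ⊆ insert v (G.neighborSet w₀ ∩ (D \ {v})) := by
      rintro t ⟨h1, h2⟩
      by_cases h : t = v
      · exact Or.inl h
      · exact Or.inr ⟨h1, h2, h⟩
    have := Set.ncard_le_ncard hsub (Set.toFinite _)
    have hle := Set.ncard_insert_le v (G.neighborSet w₀ ∩ (D \ {v}))
    omega
  have hd₀card : (G.neighborSet w₀ ∩ (D \ {v})).ncard = 1 := by omega
  obtain ⟨d₀, hd₀⟩ := Set.ncard_eq_one.mp hd₀card
  have hd₀mem : d₀ ∈ G.neighborSet w₀ ∩ (D \ {v}) := by rw [hd₀]; rfl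
  have hNwD : G.neighborSet w₀ ∩ D = {v, d₀} := by
    ext t
    simp only [Set.mem_insert_iff, Set.mem_singleton_iff]
    constructor
    · rintro ⟨htN, htD⟩
      by_cases h : t = v
      · exact Or.inl h
      · have : t ∈ G.neighborSet w₀ ∩ (D \ {v}) := ⟨htN, htD, h⟩
        rw [hd₀] at this
        exact Or.inr this
    · rintro (rfl | rfl)
      · exact ⟨hw₀mem.1.symm, hv.2⟩
      · exact ⟨hd₀mem.1, hd₀mem.2.1⟩
  have hd₀DC : d₀ ∈ D \ C := by
    obtain ⟨y, hy⟩ := q_pos h3 hCD hw₀mem.2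
    have hyv : y ≠ v := fun h => hy.2.2 (h ▸ hv.1)
    have : y ∈ G.neighborSet w₀ ∩ (D \ {v}) := ⟨hy.1, hy.2.1, hyv⟩
    rw [hd₀, Set.mem_singleton_iff] at this
    exact this ▸ hy.2
  have hNwDC : G.neighborSet w₀ ∩ (D \ C) = {d₀} := by
    apply Set.Subset.antisymm
    · rintro t ⟨h1, h2, h3'⟩
      have htv : t ≠ v := fun h => h3' (h ▸ hv.1)
      have : t ∈ G.neighborSet w₀ ∩ (D \ {v}) := ⟨h1, h2, htv⟩
      rw [hd₀] at this
      exact this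
    · rintro t rfl
      exact ⟨hd₀mem.1, hd₀DC⟩
  refine ⟨hu₀mem, ⟨d₀, hd₀DC, hd₀mem.1, hNwDC, hNwD⟩, ?_⟩
  intro u hu
  have huv : u ≠ v := fun h => hu.2 (by simp [h])
  have huw : u ≠ w₀ := fun h => hu.2 (by simp [h])
  have hvNu : v ∉ G.neighborSet u := by
    intro h
    have : u ∈ G.neighborSet v ∩ (C ∩ D) := ⟨h.symm, hu.1⟩
    rw [hw₀] at this
    exact huw this
  have hwNu : w₀ ∉ G.neighborSet u := by
    intro h
    have : u ∈ G.neighborSet w₀ ∩ D := ⟨h.symm, hu.1.2⟩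
    rw [hNwD] at this
    rcases this with rfl | rfl
    · exact huv rfl
    · exact hd₀DC.2 hu.1.1
  have heq : G.neighborSet u ∩ (D \ {v, w₀}) = G.neighborSet u ∩ D := by
    apply Set.Subset.antisymm
    · rintro t ⟨h1, h2⟩; exact ⟨h1, h2.1⟩
    · rintro t ⟨h1, h2⟩
      refine ⟨h1, h2, ?_⟩
      simp only [Set.mem_insert_iff, Set.mem_singleton_iff]
      rintro (rfl | rfl)
      · exact hvNu h1
      · exact hwNu h1
  rw [heq]
  exact (hCD.2 u hu.1).2

lemma count_contra (hAB : TriSep G A B) (hCD : TriSep G C D)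
    (hv : v ∈ C ∩ D) (hw : w₀ ∈ C ∩ D) (hvw : v ≠ w₀)
    (hvA : v ∈ A \ B) (hwB : w₀ ∈ B \ A) (hadj : G.Adj v w₀)
    {t₂ t₃ : V} (ht₂ : t₂ ∈ B \ A) (ht₂C : t₂ ∉ C ∩ D) (hadj2 : G.Adj v t₂)
    (ht₃ : t₃ ∈ A \ B) (ht₃C : t₃ ∉ C ∩ D) (hadj3 : G.Adj w₀ t₃)
    (hold : sepEdges G C D ⊆ sepEdges G A B)
    (hU : (C ∩ D) \ {v, w₀} ⊆ A ∩ B) : False := by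
  have hvt₃ : v ≠ t₃ := fun h => ht₃C (h ▸ hv)
  have hwt₂ : w₀ ≠ t₂ := fun h => ht₂C (h ▸ hw)
  have he1 : s(v, w₀) ∈ sepEdges G A B := mem_sepEdges_intro hadj hvA hwB
  have he2 : s(v, t₂) ∈ sepEdges G A B := mem_sepEdges_intro hadj2 hvA ht₂
  have he3 : s(w₀, t₃) ∈ sepEdges G A B := by
    rw [Sym2.eq_swap]
    exact mem_sepEdges_intro hadj3.symm ht₃ hwB
  have hne12 : s(v, w₀) ≠ s(v, t₂) := sym2_ne' (fun h => hvw h.symm) hwt₂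
  have hne13 : s(v, w₀) ≠ s(w₀, t₃) := sym2_ne hvw hvt₃
  have hne23 : s(v, t₂) ≠ s(w₀, t₃) := sym2_ne hvw hvt₃
  have hnm3 : s(w₀, t₃) ∉ sepEdges G C D := not_mem_sepEdges_of_sep hw t₃
  have hnm2 : s(v, t₂) ∉ sepEdges G C D := not_mem_sepEdges_of_sep hv t₂
  have hnm1 : s(v, w₀) ∉ sepEdges G C D := not_mem_sepEdges_of_sep hv w₀
  have hEcard : (insert s(v, w₀) (insert s(v, t₂) (insert s(w₀, t₃)
      (sepEdges G C D)))).ncard = (sepEdges G C D).ncard + 3 := by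
    rw [Set.ncard_insert_of_notMem (by simp [hne12, hne13, hnm1]) (Set.toFinite _),
      Set.ncard_insert_of_notMem (by simp [hne23, hnm2]) (Set.toFinite _),
      Set.ncard_insert_of_notMem hnm3 (Set.toFinite _)]
  have hEsub : insert s(v, w₀) (insert s(v, t₂) (insert s(w₀, t₃) (sepEdges G C D)))
      ⊆ sepEdges G A B := by
    rintro e (rfl | rfl | rfl | he)
    exacts [he1, he2, he3, hold he]
  have hbound := order_bound hAB hU hEsub
  rw [hEcard] at hbound
  have hUcard : ((C ∩ D) \ {v, w₀}).ncard = (C ∩ D).ncard - 2 := by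
    rw [Set.ncard_diff (by rintro t (rfl | rfl); exacts [hv, hw]) (Set.toFinite _),
      Set.ncard_pair hvw]
  have horder := hCD.1.2
  rw [sepOrder_eq] at horder
  have h2 : 2 ≤ (C ∩ D).ncard := by
    have hsub : ({v, w₀} : Set V) ⊆ C ∩ D := by rintro t (rfl | rfl); exacts [hv, hw]
    have := Set.ncard_le_ncard hsub (Set.toFinite _)
    rw [Set.ncard_pair hvw] at this
    omega
  omega

end InvStruct


section ShiftKeep

variable {G : SimpleGraph V} {A B C D : Set V} {v : V}

lemma sepEdges_mono_of {G : SimpleGraph V} {A B C D : Set V}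
    (hCA : C \ D ⊆ A \ B) (hDB : D \ C ⊆ B \ A) :
    sepEdges G C D ⊆ sepEdges G A B := by
  rintro e ⟨he, x, hx, y, hy, rfl⟩
  exact ⟨he, x, hCA hx, y, hDB hy, rfl⟩

lemma shiftkeep (h3 : KConnected 3 G) (hAB : TriSep G A B) (hABs : StrongSep G A B)
    (hABnt : NontrivialSep G A B) (hCD : TriSep G C D) (hv : v ∈ C ∩ D)
    (hdeg : (G.neighborSet v).ncard = 3) (hnn : ¬ Nested A B C D) :
    ∃ C' D', TriSep G C' D' ∧ (C' ∩ D').ncard < (C ∩ D).ncard ∧ ¬ Nested A B C' D' := by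
  obtain ⟨w₀, a, b, hw₀, ha, hb⟩ := nbhd_struct h3 hCD hv hdeg
  have hw₀P : w₀ ∈ G.neighborSet v ∩ (C ∩ D) := by rw [hw₀]; rfl
  have haP : a ∈ G.neighborSet v ∩ (C \ D) := by rw [ha]; rfl
  have hbP : b ∈ G.neighborSet v ∩ (D \ C) := by rw [hb]; rfl
  have hunivAB := hAB.1.1.1
  have hunivBA : B ∪ A = Set.univ := by rw [Set.union_comm]; exact hunivAB
  have hN1 : ¬(A ⊆ C ∧ D ⊆ B) := fun h => hnn (Or.inl h)
  have hN2 : ¬(A ⊆ D ∧ C ⊆ B) := fun h => hnn (Or.inr (Or.inl h))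
  have hN3 : ¬(B ⊆ C ∧ D ⊆ A) := fun h => hnn (Or.inr (Or.inr (Or.inl h)))
  have hN4 : ¬(B ⊆ D ∧ C ⊆ A) := fun h => hnn (Or.inr (Or.inr (Or.inr h)))
  have hvw : v ≠ w₀ := by
    intro h
    have hm := hw₀P.1
    rw [← h] at hm
    exact G.notMem_neighborSet_self hm
  have hadjvw : G.Adj v w₀ := hw₀P.1
  have hadjva : G.Adj v a := haP.1
  have hadjvb : G.Adj v b := hbP.1
  have haCD : a ∉ C ∩ D := fun h => haP.2.2 h.2
  have hbCD : b ∉ C ∩ D := fun h => hbP.2.2 h.1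
  have sideB : ∀ {t : V}, t ∉ A → t ∈ B \ A := fun ht => ⟨mem_of_union_univ hunivAB ht, ht⟩
  have sideA : ∀ {t : V}, t ∉ B → t ∈ A \ B := fun ht => ⟨mem_of_union_univ hunivBA ht, ht⟩
  have hvAB : v ∈ A ∨ v ∈ B := by
    have := Set.eq_univ_iff_forall.mp hunivAB v
    rwa [Set.mem_union] at this
  have hwAB : w₀ ∈ A ∨ w₀ ∈ B := by
    have := Set.eq_univ_iff_forall.mp hunivAB w₀
    rwa [Set.mem_union] at this
  have hsm1 : (C ∩ (D \ {v})).ncard < (C ∩ D).ncard := by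
    rw [sep_inter_sdiff]
    exact Set.ncard_diff_singleton_lt_of_mem hv (Set.toFinite _)
  have hsm1' : ((C \ {v}) ∩ D).ncard < (C ∩ D).ncard := by
    rw [sep_sdiff_inter]
    exact Set.ncard_diff_singleton_lt_of_mem hv (Set.toFinite _)
  have hpairsub : (C ∩ D) \ {v, w₀} ⊆ (C ∩ D) \ {v} := by
    intro t ht
    exact ⟨ht.1, fun h => ht.2 (Or.inl h)⟩
  have hsm2 : (C ∩ (D \ {v, w₀})).ncard < (C ∩ D).ncard := by
    rw [sep_inter_sdiff]
    calc ((C ∩ D) \ {v, w₀}).ncard ≤ ((C ∩ D) \ {v}).ncard :=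
          Set.ncard_le_ncard hpairsub (Set.toFinite _)
      _ < (C ∩ D).ncard := Set.ncard_diff_singleton_lt_of_mem hv (Set.toFinite _)
  have hsm2' : ((C \ {v, w₀}) ∩ D).ncard < (C ∩ D).ncard := by
    rw [sep_sdiff_inter]
    calc ((C ∩ D) \ {v, w₀}).ncard ≤ ((C ∩ D) \ {v}).ncard :=
          Set.ncard_le_ncard hpairsub (Set.toFinite _)
      _ < (C ∩ D).ncard := Set.ncard_diff_singleton_lt_of_mem hv (Set.toFinite _)
  by_cases hcondC : ∀ u ∈ (C ∩ D) \ {v}, 2 ≤ (G.neighborSet u ∩ (D \ {v})).ncard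
  · have t1 : TriSep G C (D \ {v}) := tri_shift_one hCD hv hb hcondC
    by_cases hnC : Nested A B C (D \ {v})
    · have ho : (A ⊆ C ∧ D \ {v} ⊆ B) ∨ (B ⊆ C ∧ D \ {v} ⊆ A) := by
        rcases hnC with h | h | h | h
        · exact Or.inl h
        · exact absurd ⟨h.1.trans Set.diff_subset, h.2⟩ hN2
        · exact Or.inr h
        · exact absurd ⟨h.1.trans Set.diff_subset, h.2⟩ hN4
      by_cases hcondD : ∀ u ∈ (C ∩ D) \ {v}, 2 ≤ (G.neighborSet u ∩ (C \ {v})).ncard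
      · have t2 : TriSep G (C \ {v}) D := by
          have hv' : v ∈ D ∩ C := by rwa [Set.inter_comm]
          have hcond' : ∀ u ∈ (D ∩ C) \ {v}, 2 ≤ (G.neighborSet u ∩ (C \ {v})).ncard := by
            rw [Set.inter_comm D C]; exact hcondD
          exact (tri_shift_one hCD.symm hv' ha hcond').symm
        by_cases hnD : Nested A B (C \ {v}) D
        · exfalso
          have ho' : (A ⊆ D ∧ C \ {v} ⊆ B) ∨ (B ⊆ D ∧ C \ {v} ⊆ A) := by
            rcases hnD with h | h | h | h
            · exact absurd ⟨h.1.trans Set.diff_subset, h.2⟩ hN1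
            · exact Or.inl h
            · exact absurd ⟨h.1.trans Set.diff_subset, h.2⟩ hN3
            · exact Or.inr h
          rcases ho with ⟨h1, h2⟩ | ⟨h1, h2⟩ <;> rcases ho' with ⟨h1', h2'⟩ | ⟨h1', h2'⟩
          · exact small_side h3 hAB hABs hABnt.1 hCD hv hdeg (Set.subset_inter h1 h1')
          · have hv1 : v ∉ B := missing_single h2 (fun h => hN1 ⟨h1, h⟩)
            have hv2 : v ∉ A := missing_single h2' (fun h => hN4 ⟨h1', h⟩)
            rcases hvAB with h | h
            exacts [hv2 h, hv1 h]
          · have hv2 : v ∉ A := missing_single h2 (fun h => hN3 ⟨h1, h⟩)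
            have hv1 : v ∉ B := missing_single h2' (fun h => hN2 ⟨h1', h⟩)
            rcases hvAB with h | h
            exacts [hv2 h, hv1 h]
          · exact small_side h3 hAB.symm hABs.symm hABnt.2 hCD hv hdeg
              (Set.subset_inter h1 h1')
        · exact ⟨C \ {v}, D, t2, hsm1', hnD⟩
      · -- nC holds but the D-side shift condition fails (invD)
        have hv' : v ∈ D ∩ C := by rwa [Set.inter_comm]
        have hw₀' : G.neighborSet v ∩ (D ∩ C) = {w₀} := by rw [Set.inter_comm D C]; exact hw₀
        have hfail' : ¬ ∀ u ∈ (D ∩ C) \ {v}, 2 ≤ (G.neighborSet u ∩ (C \ {v})).ncard := by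
          rw [Set.inter_comm D C]; exact hcondD
        obtain ⟨hw₀mem', ⟨c₀, hc₀CD, hadjwc, hNwCD, hNwC⟩, hcond2'⟩ :=
          inv_struct h3 hCD.symm hv' hw₀' hfail'
        have hc₀CD' : c₀ ∉ C ∩ D := fun h => hc₀CD.2 h.2
        have t4 : TriSep G (C \ {v, w₀}) D :=
          (tri_shift_two hCD.symm hv' (by rw [Set.inter_comm]; exact hw₀P.2) hvw
            ha hNwCD hcond2').symm
        by_cases hnDD : Nested A B (C \ {v, w₀}) D
        · exfalso
          have ho'' : (A ⊆ D ∧ C \ {v, w₀} ⊆ B) ∨ (B ⊆ D ∧ C \ {v, w₀} ⊆ A) := by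
            rcases hnDD with h | h | h | h
            · exact absurd ⟨h.1.trans Set.diff_subset, h.2⟩ hN1
            · exact Or.inl h
            · exact absurd ⟨h.1.trans Set.diff_subset, h.2⟩ hN3
            · exact Or.inr h
          rcases ho with ⟨h1, h2⟩ | ⟨h1, h2⟩ <;> rcases ho'' with ⟨h1', h2'⟩ | ⟨h1', h2'⟩
          · exact small_side h3 hAB hABs hABnt.1 hCD hv hdeg (Set.subset_inter h1 h1')
          · -- (o1, O4): A⊆C, D\{v}⊆B, B⊆D, C\{v,w₀}⊆A ; v ∈ A\B, w₀ ∈ B\A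
            have hvB : v ∉ B := missing_single h2 (fun h => hN1 ⟨h1, h⟩)
            have hvA : v ∈ A := hvAB.resolve_right (fun h => hvB h)
            have hw₀A : w₀ ∉ A := by
              rcases missing_pair h2' (fun h => hN4 ⟨h1', h⟩) with h | h
              · exact absurd hvA h
              · exact h
            exact count_contra hAB hCD hv hw₀P.2 hvw ⟨hvA, hvB⟩ (sideB hw₀A) hadjvw
              (t₂ := b) (sideB (fun h => hbP.2.2 (h1 h))) hbCD hadjvb
              (t₃ := c₀) (sideA (fun h => hc₀CD.2 (h1' h))) hc₀CD' hadjwc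
              (sepEdges_mono_of
                (fun t ht => sideA (fun h => ht.2 (h1' h)))
                (fun t ht => sideB (fun h => ht.2 (h1 h))))
              (fun u hu => ⟨h2' ⟨hu.1.1, hu.2⟩, h2 ⟨hu.1.2, fun h => hu.2 (Or.inl h)⟩⟩)
          · -- (o3, O2): B⊆C, D\{v}⊆A, A⊆D, C\{v,w₀}⊆B ; v ∈ B\A, w₀ ∈ A\B
            have hvA : v ∉ A := missing_single h2 (fun h => hN3 ⟨h1, h⟩)
            have hvB : v ∈ B := hvAB.resolve_left (fun h => hvA h)
            have hw₀B : w₀ ∉ B := by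
              rcases missing_pair h2' (fun h => hN2 ⟨h1', h⟩) with h | h
              · exact absurd hvB h
              · exact h
            exact count_contra hAB.symm hCD hv hw₀P.2 hvw ⟨hvB, hvA⟩ (sideA hw₀B) hadjvw
              (t₂ := b) (sideA (fun h => hbP.2.2 (h1 h))) hbCD hadjvb
              (t₃ := c₀) (sideB (fun h => hc₀CD.2 (h1' h))) hc₀CD' hadjwc
              (sepEdges_mono_of
                (fun t ht => sideB (fun h => ht.2 (h1' h)))
                (fun t ht => sideA (fun h => ht.2 (h1 h))))
              (fun u hu => ⟨h2' ⟨hu.1.1, hu.2⟩, h2 ⟨hu.1.2, fun h => hu.2 (Or.inl h)⟩⟩)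
          · exact small_side h3 hAB.symm hABs.symm hABnt.2 hCD hv hdeg
              (Set.subset_inter h1 h1')
        · exact ⟨C \ {v, w₀}, D, t4, hsm2', hnDD⟩
    · exact ⟨C, D \ {v}, t1, hsm1, hnC⟩
  · -- invC
    obtain ⟨hw₀mem, ⟨d₀, hd₀DC, hadjwd, hNwDC, hNwD⟩, hcond2⟩ :=
      inv_struct h3 hCD hv hw₀ hcondC
    have hd₀CD : d₀ ∉ C ∩ D := fun h => hd₀DC.2 h.1
    have t3 : TriSep G C (D \ {v, w₀}) :=
      tri_shift_two hCD hv hw₀P.2 hvw hb hNwDC hcond2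
    by_cases hnCC : Nested A B C (D \ {v, w₀})
    · have hoCC : (A ⊆ C ∧ D \ {v, w₀} ⊆ B) ∨ (B ⊆ C ∧ D \ {v, w₀} ⊆ A) := by
        rcases hnCC with h | h | h | h
        · exact Or.inl h
        · exact absurd ⟨h.1.trans Set.diff_subset, h.2⟩ hN2
        · exact Or.inr h
        · exact absurd ⟨h.1.trans Set.diff_subset, h.2⟩ hN4
      by_cases hcondD : ∀ u ∈ (C ∩ D) \ {v}, 2 ≤ (G.neighborSet u ∩ (C \ {v})).ncard
      · have t2 : TriSep G (C \ {v}) D := by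
          have hv' : v ∈ D ∩ C := by rwa [Set.inter_comm]
          have hcond' : ∀ u ∈ (D ∩ C) \ {v}, 2 ≤ (G.neighborSet u ∩ (C \ {v})).ncard := by
            rw [Set.inter_comm D C]; exact hcondD
          exact (tri_shift_one hCD.symm hv' ha hcond').symm
        by_cases hnD : Nested A B (C \ {v}) D
        · exfalso
          have ho' : (A ⊆ D ∧ C \ {v} ⊆ B) ∨ (B ⊆ D ∧ C \ {v} ⊆ A) := by
            rcases hnD with h | h | h | h
            · exact absurd ⟨h.1.trans Set.diff_subset, h.2⟩ hN1
            · exact Or.inl h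
            · exact absurd ⟨h.1.trans Set.diff_subset, h.2⟩ hN3
            · exact Or.inr h
          rcases hoCC with ⟨h1, h2⟩ | ⟨h1, h2⟩ <;> rcases ho' with ⟨h1', h2'⟩ | ⟨h1', h2'⟩
          · exact small_side h3 hAB hABs hABnt.1 hCD hv hdeg (Set.subset_inter h1 h1')
          · -- (O1, o4′): A⊆C, D\{v,w₀}⊆B, B⊆D, C\{v}⊆A ; v ∈ B\A, w₀ ∈ A\B
            have hvA : v ∉ A := missing_single h2' (fun h => hN4 ⟨h1', h⟩)
            have hvB : v ∈ B := hvAB.resolve_left (fun h => hvA h)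
            have hw₀B : w₀ ∉ B := by
              rcases missing_pair h2 (fun h => hN1 ⟨h1, h⟩) with h | h
              · exact absurd hvB h
              · exact h
            exact count_contra hAB.symm hCD hv hw₀P.2 hvw ⟨hvB, hvA⟩ (sideA hw₀B) hadjvw
              (t₂ := a) (sideA (fun h => haP.2.2 (h1' h))) haCD hadjva
              (t₃ := d₀) (sideB (fun h => hd₀DC.2 (h1 h))) hd₀CD hadjwd
              (by intro e he
                  rw [sepEdges_comm] at he
                  exact sepEdges_mono_of
                    (fun t ht => sideB (fun h => ht.2 (h1 h)))
                    (fun t ht => sideA (fun h => ht.2 (h1' h))) he)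
              (fun u hu => ⟨h2 ⟨hu.1.2, hu.2⟩, h2' ⟨hu.1.1, fun h => hu.2 (Or.inl h)⟩⟩)
          · -- (O3, o2′): B⊆C, D\{v,w₀}⊆A, A⊆D, C\{v}⊆B ; v ∈ A\B, w₀ ∈ B\A
            have hvB : v ∉ B := missing_single h2' (fun h => hN2 ⟨h1', h⟩)
            have hvA : v ∈ A := hvAB.resolve_right (fun h => hvB h)
            have hw₀A : w₀ ∉ A := by
              rcases missing_pair h2 (fun h => hN3 ⟨h1, h⟩) with h | h
              · exact absurd hvA h
              · exact h
            exact count_contra hAB hCD hv hw₀P.2 hvw ⟨hvA, hvB⟩ (sideB hw₀A) hadjvw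
              (t₂ := a) (sideB (fun h => haP.2.2 (h1' h))) haCD hadjva
              (t₃ := d₀) (sideA (fun h => hd₀DC.2 (h1 h))) hd₀CD hadjwd
              (by intro e he
                  rw [sepEdges_comm] at he
                  exact sepEdges_mono_of
                    (fun t ht => sideA (fun h => ht.2 (h1 h)))
                    (fun t ht => sideB (fun h => ht.2 (h1' h))) he)
              (fun u hu => ⟨h2 ⟨hu.1.2, hu.2⟩, h2' ⟨hu.1.1, fun h => hu.2 (Or.inl h)⟩⟩)
          · exact small_side h3 hAB.symm hABs.symm hABnt.2 hCD hv hdeg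
              (Set.subset_inter h1 h1')
        · exact ⟨C \ {v}, D, t2, hsm1', hnD⟩
      · -- invC and invD
        have hv' : v ∈ D ∩ C := by rwa [Set.inter_comm]
        have hw₀' : G.neighborSet v ∩ (D ∩ C) = {w₀} := by rw [Set.inter_comm D C]; exact hw₀
        have hfail' : ¬ ∀ u ∈ (D ∩ C) \ {v}, 2 ≤ (G.neighborSet u ∩ (C \ {v})).ncard := by
          rw [Set.inter_comm D C]; exact hcondD
        obtain ⟨hw₀mem', ⟨c₀, hc₀CD, hadjwc, hNwCD, hNwC⟩, hcond2'⟩ :=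
          inv_struct h3 hCD.symm hv' hw₀' hfail'
        have hc₀CD' : c₀ ∉ C ∩ D := fun h => hc₀CD.2 h.2
        have t4 : TriSep G (C \ {v, w₀}) D :=
          (tri_shift_two hCD.symm hv' (by rw [Set.inter_comm]; exact hw₀P.2) hvw
            ha hNwCD hcond2').symm
        by_cases hnDD : Nested A B (C \ {v, w₀}) D
        · exfalso
          have hoDD : (A ⊆ D ∧ C \ {v, w₀} ⊆ B) ∨ (B ⊆ D ∧ C \ {v, w₀} ⊆ A) := by
            rcases hnDD with h | h | h | h
            · exact absurd ⟨h.1.trans Set.diff_subset, h.2⟩ hN1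
            · exact Or.inl h
            · exact absurd ⟨h.1.trans Set.diff_subset, h.2⟩ hN3
            · exact Or.inr h
          rcases hoCC with ⟨h1, h2⟩ | ⟨h1, h2⟩ <;> rcases hoDD with ⟨h1', h2'⟩ | ⟨h1', h2'⟩
          · exact small_side h3 hAB hABs hABnt.1 hCD hv hdeg (Set.subset_inter h1 h1')
          · -- (O1, O4): A⊆C, D\{v,w₀}⊆B, B⊆D, C\{v,w₀}⊆A
            rcases missing_pair h2 (fun h => hN1 ⟨h1, h⟩) with hvB | hw₀B
            · have hvA : v ∈ A := hvAB.resolve_right (fun h => hvB h)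
              have hw₀A : w₀ ∉ A := by
                rcases missing_pair h2' (fun h => hN4 ⟨h1', h⟩) with h | h
                · exact absurd hvA h
                · exact h
              exact count_contra hAB hCD hv hw₀P.2 hvw ⟨hvA, hvB⟩ (sideB hw₀A) hadjvw
                (t₂ := b) (sideB (fun h => hbP.2.2 (h1 h))) hbCD hadjvb
                (t₃ := c₀) (sideA (fun h => hc₀CD.2 (h1' h))) hc₀CD' hadjwc
                (sepEdges_mono_of
                  (fun t ht => sideA (fun h => ht.2 (h1' h)))
                  (fun t ht => sideB (fun h => ht.2 (h1 h))))
                (fun u hu => ⟨h2' ⟨hu.1.1, hu.2⟩, h2 ⟨hu.1.2, hu.2⟩⟩)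
            · have hw₀A : w₀ ∈ A := hwAB.resolve_right (fun h => hw₀B h)
              have hvA : v ∉ A := by
                rcases missing_pair h2' (fun h => hN4 ⟨h1', h⟩) with h | h
                · exact h
                · exact absurd hw₀A h
              have hvB : v ∈ B := hvAB.resolve_left (fun h => hvA h)
              exact count_contra hAB.symm hCD hv hw₀P.2 hvw ⟨hvB, hvA⟩ ⟨hw₀A, hw₀B⟩ hadjvw
                (t₂ := a) (sideA (fun h => haP.2.2 (h1' h))) haCD hadjva
                (t₃ := d₀) (sideB (fun h => hd₀DC.2 (h1 h))) hd₀CD hadjwd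
                (by intro e he
                    rw [sepEdges_comm] at he
                    exact sepEdges_mono_of
                      (fun t ht => sideB (fun h => ht.2 (h1 h)))
                      (fun t ht => sideA (fun h => ht.2 (h1' h))) he)
                (fun u hu => ⟨h2 ⟨hu.1.2, hu.2⟩, h2' ⟨hu.1.1, hu.2⟩⟩)
          · -- (O3, O2): B⊆C, D\{v,w₀}⊆A, A⊆D, C\{v,w₀}⊆B
            rcases missing_pair h2 (fun h => hN3 ⟨h1, h⟩) with hvA | hw₀A
            · have hvB : v ∈ B := hvAB.resolve_left (fun h => hvA h)
              have hw₀B : w₀ ∉ B := by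
                rcases missing_pair h2' (fun h => hN2 ⟨h1', h⟩) with h | h
                · exact absurd hvB h
                · exact h
              exact count_contra hAB.symm hCD hv hw₀P.2 hvw ⟨hvB, hvA⟩ (sideA hw₀B) hadjvw
                (t₂ := b) (sideA (fun h => hbP.2.2 (h1 h))) hbCD hadjvb
                (t₃ := c₀) (sideB (fun h => hc₀CD.2 (h1' h))) hc₀CD' hadjwc
                (sepEdges_mono_of
                  (fun t ht => sideB (fun h => ht.2 (h1' h)))
                  (fun t ht => sideA (fun h => ht.2 (h1 h))))
                (fun u hu => ⟨h2' ⟨hu.1.1, hu.2⟩, h2 ⟨hu.1.2, hu.2⟩⟩)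
            · have hw₀B : w₀ ∈ B := hwAB.resolve_left (fun h => hw₀A h)
              have hvB : v ∉ B := by
                rcases missing_pair h2' (fun h => hN2 ⟨h1', h⟩) with h | h
                · exact h
                · exact absurd hw₀B h
              have hvA : v ∈ A := hvAB.resolve_right (fun h => hvB h)
              exact count_contra hAB hCD hv hw₀P.2 hvw ⟨hvA, hvB⟩ ⟨hw₀B, hw₀A⟩ hadjvw
                (t₂ := a) (sideB (fun h => haP.2.2 (h1' h))) haCD hadjva
                (t₃ := d₀) (sideA (fun h => hd₀DC.2 (h1 h))) hd₀CD hadjwd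
                (by intro e he
                    rw [sepEdges_comm] at he
                    exact sepEdges_mono_of
                      (fun t ht => sideA (fun h => ht.2 (h1 h)))
                      (fun t ht => sideB (fun h => ht.2 (h1' h))) he)
                (fun u hu => ⟨h2 ⟨hu.1.2, hu.2⟩, h2' ⟨hu.1.1, hu.2⟩⟩)
          · exact small_side h3 hAB.symm hABs.symm hABnt.2 hCD hv hdeg
              (Set.subset_inter h1 h1')
        · exact ⟨C \ {v, w₀}, D, t4, hsm2', hnDD⟩
    · exact ⟨C, D \ {v, w₀}, t3, hsm2, hnCC⟩

end ShiftKeep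


section Main

variable {G : SimpleGraph V} {A B C D : Set V} {v : V}

lemma trivial_trisep (h3 : KConnected 3 G) (hdeg : (G.neighborSet v).ncard = 3) :
    TriSep G {v} {v}ᶜ := by
  have hvc : v ∉ ({v}ᶜ : Set V) := fun h => h rfl
  refine ⟨⟨⟨Set.union_compl_self _, ⟨v, rfl, hvc⟩, ?_⟩, ?_⟩, ?_⟩
  · have hcard : 4 ≤ Nat.card V := card_ge h3
    rw [Nat.card_eq_fintype_card] at hcard
    obtain ⟨u, hu⟩ := Fintype.exists_ne_of_one_lt_card (by omega) v
    exact ⟨u, fun h => hu (Set.mem_singleton_iff.mp h),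
      fun h => hu (Set.mem_singleton_iff.mp h)⟩
  · rw [sepOrder_eq, Set.inter_compl_self, Set.ncard_empty]
    have hEq : sepEdges G {v} {v}ᶜ = (fun y => s(v, y)) '' (G.neighborSet v) := by
      ext e
      constructor
      · rintro ⟨he, x, hx, y, hy, rfl⟩
        have hxv : x = v := Set.mem_singleton_iff.mp hx.1
        subst hxv
        exact ⟨y, G.mem_edgeSet.1 he, rfl⟩
      · rintro ⟨y, hy, rfl⟩
        have hyv : y ≠ v := (G.mem_neighborSet v y |>.mp hy).ne'
        exact ⟨G.mem_edgeSet.2 hy, v, ⟨rfl, hvc⟩,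
          y, ⟨fun h => hyv (Set.mem_singleton_iff.mp h),
            fun h => hyv (Set.mem_singleton_iff.mp h)⟩, rfl⟩
    rw [hEq, Set.ncard_image_of_injOn, hdeg]
    rintro y hy y' hy' he
    rw [Sym2.eq_iff] at he
    rcases he with ⟨-, h⟩ | ⟨h1, h2⟩
    · exact h
    · exact h2.trans h1
  · intro u hu
    rw [Set.inter_compl_self] at hu
    exact absurd hu (Set.notMem_empty u)

lemma strong_of_totallyNested (h3 : KConnected 3 G) (hAB : TriSep G A B)
    (hTN : TotallyNested G A B) : StrongSep G A B := by
  intro u hu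
  have hd3 := three_le_deg h3 u
  by_contra hlt
  push_neg at hlt
  have hdeg : (G.neighborSet u).ncard = 3 := by omega
  have htriv := trivial_trisep h3 hdeg
  have huN : u ∉ G.neighborSet u := G.notMem_neighborSet_self
  have hnest := hTN {u} {u}ᶜ htriv
  have hcond := hAB.2 u hu
  rcases hnest with ⟨h1, -⟩ | ⟨h1, -⟩ | ⟨h1, -⟩ | ⟨h1, -⟩
  · have hsub : G.neighborSet u ∩ A ⊆ (∅ : Set V) := by
      rintro t ⟨htN, htA⟩
      have := Set.mem_singleton_iff.mp (h1 htA)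
      rw [this] at htN
      exact absurd htN huN
    have := Set.ncard_le_ncard hsub (Set.toFinite _)
    rw [Set.ncard_empty] at this
    omega
  · exact absurd (h1 hu.1) (fun h => h rfl)
  · have hsub : G.neighborSet u ∩ B ⊆ (∅ : Set V) := by
      rintro t ⟨htN, htB⟩
      have := Set.mem_singleton_iff.mp (h1 htB)
      rw [this] at htN
      exact absurd htN huN
    have := Set.ncard_le_ncard hsub (Set.toFinite _)
    rw [Set.ncard_empty] at this
    omega
  · exact absurd (h1 hu.2) (fun h => h rfl)

lemma strong_case (h3 : KConnected 3 G) (hAB : TriSep G A B) (hABs : StrongSep G A B)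
    (hH : ∀ C D : Set V, TriSep G C D → StrongSep G C D → NontrivialSep G C D →
      Nested A B C D)
    (hCD : TriSep G C D) (hCDs : StrongSep G C D) : Nested A B C D := by
  by_cases hnt : NontrivialSep G C D
  · exact hH C D hCD hCDs hnt
  · have hz : ∀ z : V, (G.neighborSet z).ncard = 3 → z ∉ A ∩ B := by
      intro z hz3 hmem
      have := hABs z hmem
      omega
    have hAorB : ∀ z : V, z ∈ A ∨ z ∈ B := by
      intro z
      have := Set.eq_univ_iff_forall.mp hAB.1.1.1 z
      rwa [Set.mem_union] at this
    unfold NontrivialSep at hnt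
    push_neg at hnt
    by_cases hcycC : HasCycleIn G C
    · -- then D has no cycle
      obtain ⟨z, hD, hC, hz3⟩ := acyclic_side h3 hCD.symm (hnt hcycC)
      have hzAB := hz z hz3
      rcases hAorB z with hzA | hzB
      · -- z ∈ A \ B : use (B ⊆ C ∧ D ⊆ A)
        have hzB : z ∉ B := fun h => hzAB ⟨hzA, h⟩
        refine Or.inr (Or.inr (Or.inl ⟨?_, ?_⟩))
        · rw [hC]
          intro t ht h
          rw [Set.mem_singleton_iff] at h
          rw [h] at ht
          exact hzB ht
        · rw [hD]
          intro t ht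
          rw [Set.mem_singleton_iff] at ht
          rw [ht]
          exact hzA
      · have hzA : z ∉ A := fun h => hzAB ⟨h, hzB⟩
        refine Or.inl ⟨?_, ?_⟩
        · rw [hC]
          intro t ht h
          rw [Set.mem_singleton_iff] at h
          rw [h] at ht
          exact hzA ht
        · rw [hD]
          intro t ht
          rw [Set.mem_singleton_iff] at ht
          rw [ht]
          exact hzB
    · obtain ⟨z, hC, hD, hz3⟩ := acyclic_side h3 hCD hcycC
      have hzAB := hz z hz3
      rcases hAorB z with hzA | hzB
      · -- z ∈ A \ B : use (B ⊆ D ∧ C ⊆ A)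
        have hzB : z ∉ B := fun h => hzAB ⟨hzA, h⟩
        refine Or.inr (Or.inr (Or.inr ⟨?_, ?_⟩))
        · rw [hD]
          intro t ht h
          rw [Set.mem_singleton_iff] at h
          rw [h] at ht
          exact hzB ht
        · rw [hC]
          intro t ht
          rw [Set.mem_singleton_iff] at ht
          rw [ht]
          exact hzA
      · have hzA : z ∉ A := fun h => hzAB ⟨h, hzB⟩
        refine Or.inr (Or.inl ⟨?_, ?_⟩)
        · rw [hD]
          intro t ht h
          rw [Set.mem_singleton_iff] at h
          rw [h] at ht
          exact hzA ht
        · rw [hC]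
          intro t ht
          rw [Set.mem_singleton_iff] at ht
          rw [ht]
          exact hzB

end Main

/-- A nontrivial tri-separation of a 3-connected graph is totally
nested iff it is strong and nested with every strong nontrivial tri-separation. -/
theorem stmt11 (G : SimpleGraph V) (h3 : KConnected 3 G) (A B : Set V)
    (hAB : TriSep G A B) (hnt : NontrivialSep G A B) :
    TotallyNested G A B ↔
      (StrongSep G A B ∧ ∀ C D : Set V,
        TriSep G C D → StrongSep G C D → NontrivialSep G C D → Nested A B C D) := by
  constructor
  · intro hTN
    exact ⟨strong_of_totallyNested h3 hAB hTN, fun C D hCD _ _ => hTN C D hCD⟩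
  · rintro ⟨hABs, hH⟩
    intro C D hCD
    have main : ∀ n (C D : Set V), TriSep G C D → (C ∩ D).ncard ≤ n → Nested A B C D := by
      intro n
      induction n with
      | zero =>
        intro C D hCD hle
        have hempty : C ∩ D = ∅ := (Set.ncard_eq_zero (Set.toFinite _)).mp (by omega)
        have hstrong : StrongSep G C D := by
          intro u hu
          rw [hempty] at hu
          exact absurd hu (Set.notMem_empty u)
        exact strong_case h3 hAB hABs hH hCD hstrong
      | succ n ih =>
        intro C D hCD hle
        by_cases hstrong : StrongSep G C D
        · exact strong_case h3 hAB hABs hH hCD hstrong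
        · unfold StrongSep at hstrong
          push_neg at hstrong
          obtain ⟨v, hv, hlt⟩ := hstrong
          have hdeg : (G.neighborSet v).ncard = 3 := by
            have := three_le_deg h3 v
            omega
          by_contra hnn
          obtain ⟨C', D', hC'D', hlt', hnn'⟩ :=
            shiftkeep h3 hAB hABs hnt hCD hv hdeg hnn
          have h1 : 1 ≤ (C ∩ D).ncard := (Set.ncard_pos (Set.toFinite _)).2 ⟨v, hv⟩
          exact hnn' (ih C' D' hC'D' (by omega))
    exact main (C ∩ D).ncard C D hCD le_rfl

end Paper
end

section
/- In a 2-connected graph G, for every three vertices u, x, y there exists a 2-fan from u to x and y: a union of a u–x path and a u–y path meeting exactly in u. -/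
namespace Paper

open SimpleGraph

variable {V : Type*} [Fintype V] [DecidableEq V]

/-- Appending two paths that share only their junction vertex yields a path. -/
lemma isPath_append_of {G : SimpleGraph V} {a b c : V} {p : G.Walk a b} {q : G.Walk b c}
    (hp : p.IsPath) (hq : q.IsPath)
    (h : ∀ v, v ∈ p.support → v ∈ q.support → v = b) : (p.append q).IsPath := by
  rw [Walk.isPath_def, Walk.support_append]
  have hqc : q.support = b :: q.support.tail := q.support_eq_cons
  have hnd : b ∉ q.support.tail ∧ q.support.tail.Nodup := by
    have := hq.support_nodup
    rw [hqc, List.nodup_cons] at this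
    exact this
  refine List.Nodup.append hp.support_nodup hnd.2 ?_
  intro v hv hv'
  have : v ∈ q.support := by rw [hqc]; exact List.mem_cons_of_mem _ hv'
  have hvb := h v hv this
  subst hvb
  exact hnd.1 hv'

/-- The endpoint of a path does not lie in a proper initial segment. -/
lemma end_not_mem_takeUntil [DecidableEq V] {G : SimpleGraph V} {a c z : V} {p : G.Walk a c}
    (hp : p.IsPath) (hz : z ∈ p.support) (hne : c ≠ z) :
    c ∉ (p.takeUntil z hz).support := by
  intro hc
  have hspec := p.take_spec hz
  have hnd : ((p.takeUntil z hz).append (p.dropUntil z hz)).support.Nodup := by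
    rw [hspec]; exact hp.support_nodup
  rw [Walk.support_append] at hnd
  have hdisj := List.disjoint_of_nodup_append hnd
  have hcd : c ∈ (p.dropUntil z hz).support.tail := by
    have hmem : c ∈ (p.dropUntil z hz).support := Walk.end_mem_support _
    rw [(p.dropUntil z hz).support_eq_cons] at hmem
    rcases List.mem_cons.mp hmem with h1 | h1
    · exact absurd h1 hne
    · exact h1
  exact hdisj hc hcd

/-- A walk ending in a set `S` has an initial segment meeting `S` exactly in its last vertex. -/
lemma exists_first_hit {G : SimpleGraph V} {a b : V} (p : G.Walk a b) (S : Set V) (hb : b ∈ S) :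
    ∃ (c : V), c ∈ S ∧ ∃ q : G.Walk a c,
      (∀ v ∈ q.support, v ∈ S → v = c) ∧ (∀ v ∈ q.support, v ∈ p.support) ∧
      (p.IsPath → q.IsPath) := by
  induction p with
  | nil =>
    exact ⟨_, hb, Walk.nil, by simp, by simp, fun _ => Walk.IsPath.nil⟩
  | @cons a w b h r ih =>
    by_cases ha : a ∈ S
    · refine ⟨a, ha, Walk.nil, by simp, by simp, fun _ => Walk.IsPath.nil⟩
    · obtain ⟨c, hcS, q, hclean, hsub, hpath⟩ := ih hb
      refine ⟨c, hcS, Walk.cons h q, ?_, ?_, ?_⟩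
      · intro v hv hvS
        rw [Walk.support_cons, List.mem_cons] at hv
        rcases hv with rfl | hv
        · exact absurd hvS ha
        · exact hclean v hv hvS
      · intro v hv
        rw [Walk.support_cons, List.mem_cons] at hv
        rw [Walk.support_cons, List.mem_cons]
        rcases hv with rfl | hv
        · exact Or.inl rfl
        · exact Or.inr (hsub v hv)
      · intro hP
        rw [Walk.cons_isPath_iff] at hP
        rw [Walk.cons_isPath_iff]
        exact ⟨hpath hP.1, fun hmem => hP.2 (hsub a hmem)⟩

lemma reach_out {G : SimpleGraph V}
    (h2 : ∀ S : Set V, S.ncard < 2 → (G.induce Sᶜ).Connected)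
    (S : Set V) (hS : S.ncard < 2) {a b : V} (ha : a ∉ S) (hb : b ∉ S) :
    ∃ W : G.Walk a b, W.IsPath ∧ ∀ s ∈ W.support, s ∉ S := by
  obtain ⟨w⟩ := (h2 S hS).preconnected ⟨a, ha⟩ ⟨b, hb⟩
  let emb : G.induce Sᶜ ↪g G := SimpleGraph.Embedding.induce Sᶜ
  let W0 : G.Walk a b := w.map emb.toHom
  refine ⟨(W0.toPath : G.Walk a b), W0.toPath.2, ?_⟩
  intro s hs hsS
  have hs' : s ∈ W0.support := SimpleGraph.Walk.support_toPath_subset W0 hs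
  replace hs' : s ∈ (w.map emb.toHom).support := hs'
  rw [SimpleGraph.Walk.support_map] at hs'
  obtain ⟨t, _, rfl⟩ := List.mem_map.mp hs'
  exact t.2 hsS


lemma whitney {G : SimpleGraph V}
    (h2 : ∀ S : Set V, S.ncard < 2 → (G.induce Sᶜ).Connected)
    (hconn : G.Connected) :
    ∀ (n : ℕ) (a b : V), a ≠ b → G.dist a b ≤ n →
      ∃ (P Q : G.Walk a b), P.IsPath ∧ Q.IsPath ∧
        ∀ v, v ∈ P.support → v ∈ Q.support → v = a ∨ v = b := by
  intro n
  induction n with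
  | zero =>
    intro a b hab hd
    exact absurd (hconn.dist_eq_zero_iff.mp (Nat.le_zero.mp hd)) hab
  | succ n ih =>
    intro a b hab hd
    by_cases hdn : G.dist a b ≤ n
    · exact ih a b hab hdn
    have hdist : G.dist a b = n + 1 := le_antisymm hd (Nat.succ_le_of_lt (not_le.mp hdn))
    obtain ⟨W, hWp, hWl⟩ := hconn.exists_path_of_dist a b
    obtain ⟨b', hadj, q, hq⟩ := Walk.exists_eq_cons_of_ne (Ne.symm hab) W.reverse
    have hlen : q.length = n := by
      have h1 : W.reverse.length = n + 1 := by rw [Walk.length_reverse, hWl, hdist]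
      rw [hq, Walk.length_cons] at h1
      omega
    have hdb' : G.dist a b' ≤ n := by
      have := SimpleGraph.dist_le q.reverse
      rwa [Walk.length_reverse, hlen] at this
    have hbb' : b ≠ b' := hadj.ne
    by_cases hab' : a = b'
    · subst hab'
      refine ⟨Walk.cons hadj.symm Walk.nil, Walk.cons hadj.symm Walk.nil, ?_, ?_, ?_⟩
      · rw [Walk.cons_isPath_iff]
        exact ⟨Walk.IsPath.nil, by simp [hab]⟩
      · rw [Walk.cons_isPath_iff]
        exact ⟨Walk.IsPath.nil, by simp [hab]⟩
      · intro v hv _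
        simp only [Walk.support_cons, Walk.support_nil, List.mem_cons, List.mem_singleton] at hv
        rcases hv with h | h
        · exact Or.inl h
        · simp only [List.not_mem_nil, or_false] at h
          exact Or.inr h
    · obtain ⟨P1, P2, hP1, hP2, hd12⟩ := ih a b' hab' hdb'
      have hadj' : G.Adj b' b := hadj.symm
      obtain ⟨Qab, hQp, hQav⟩ := reach_out h2 {b'}
        (by rw [Set.ncard_singleton]; omega) (a := a) (b := b)
        (by simpa using hab') (by simpa using hbb')
      have hQavb' : b' ∉ Qab.support := fun hmem => hQav b' hmem rfl
      have key1 : ∀ (A C : G.Walk a b'), A.IsPath → C.IsPath →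
          (∀ v, v ∈ A.support → v ∈ C.support → v = a ∨ v = b') → b ∈ A.support →
          ∃ (P Q : G.Walk a b), P.IsPath ∧ Q.IsPath ∧
            ∀ v, v ∈ P.support → v ∈ Q.support → v = a ∨ v = b := by
        intro A C hA hC hAC hbA
        have hbC : b ∉ C.support := by
          intro hbC
          rcases hAC b hbA hbC with h | h
          · exact hab h.symm
          · exact hbb' h
        have hconsP : (Walk.cons hadj' Walk.nil : G.Walk b' b).IsPath := by
          rw [Walk.cons_isPath_iff]
          exact ⟨Walk.IsPath.nil, by simpa using Ne.symm hbb'⟩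
        have hb'tk : b' ∉ (A.takeUntil b hbA).support :=
          end_not_mem_takeUntil hA hbA (Ne.symm hbb')
        refine ⟨A.takeUntil b hbA, C.append (Walk.cons hadj' Walk.nil),
          hA.takeUntil hbA, ?_, ?_⟩
        · refine isPath_append_of hC hconsP ?_
          intro v hvC hvcons
          simp only [Walk.support_cons, Walk.support_nil, List.mem_cons,
            List.mem_singleton, List.not_mem_nil, or_false] at hvcons
          rcases hvcons with h | h
          · exact h
          · exact absurd (h ▸ hvC) hbC
        · intro v hvP hvQ
          rw [Walk.mem_support_append_iff] at hvQ
          rcases hvQ with hvC | hvcons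
          · rcases hAC v (Walk.support_takeUntil_subset _ _ hvP) hvC with h | h
            · exact Or.inl h
            · exact absurd (h ▸ hvP) hb'tk
          · simp only [Walk.support_cons, Walk.support_nil, List.mem_cons,
              List.mem_singleton, List.not_mem_nil, or_false] at hvcons
            rcases hvcons with h | h
            · exact absurd (h ▸ hvP) hb'tk
            · exact Or.inr h
      by_cases hbP1 : b ∈ P1.support
      · exact key1 P1 P2 hP1 hP2 hd12 hbP1
      by_cases hbP2 : b ∈ P2.support
      · exact key1 P2 P1 hP2 hP1 (fun v h h' => hd12 v h' h) hbP2
      obtain ⟨z, hzF, w0, hclean, hsub, hw0p⟩ := exists_first_hit Qab.reverse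
        {v | v ∈ P1.support ∨ v ∈ P2.support} (Or.inl (Walk.start_mem_support P1))
      have hw0path : w0.IsPath := hw0p hQp.reverse
      have hBsup : ∀ v, v ∈ w0.reverse.support ↔ v ∈ w0.support := by
        intro v; rw [Walk.support_reverse, List.mem_reverse]
      have hsubQ : ∀ v, v ∈ w0.support → v ∈ Qab.support := by
        intro v hv
        have := hsub v hv
        rwa [Walk.support_reverse, List.mem_reverse] at this
      have hzQ : z ∈ Qab.support := hsubQ z (Walk.end_mem_support w0)
      have hzb' : z ≠ b' := fun h => hQav z hzQ (by simp [h])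
      have key2 : ∀ (A C : G.Walk a b'), A.IsPath → C.IsPath →
          (∀ v, v ∈ A.support → v ∈ C.support → v = a ∨ v = b') →
          b ∉ C.support → (hzA : z ∈ A.support) →
          (∀ v, v ∈ A.support → v ∈ P1.support ∨ v ∈ P2.support) →
          (∀ v, v ∈ C.support → v ∈ P1.support ∨ v ∈ P2.support) →
          ∃ (P Q : G.Walk a b), P.IsPath ∧ Q.IsPath ∧
            ∀ v, v ∈ P.support → v ∈ Q.support → v = a ∨ v = b := by
        intro A C hA hC hAC hbC hzA hAF hCF
        have hb'tk : b' ∉ (A.takeUntil z hzA).support :=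
          end_not_mem_takeUntil hA hzA (Ne.symm hzb')
        have hconsP : (Walk.cons hadj' Walk.nil : G.Walk b' b).IsPath := by
          rw [Walk.cons_isPath_iff]
          exact ⟨Walk.IsPath.nil, by simpa using Ne.symm hbb'⟩
        refine ⟨(A.takeUntil z hzA).append w0.reverse,
          C.append (Walk.cons hadj' Walk.nil), ?_, ?_, ?_⟩
        · refine isPath_append_of (hA.takeUntil hzA) hw0path.reverse ?_
          intro v hvtk hvB
          exact hclean v ((hBsup v).mp hvB)
            (hAF v (Walk.support_takeUntil_subset _ _ hvtk))
        · refine isPath_append_of hC hconsP ?_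
          intro v hvC hvcons
          simp only [Walk.support_cons, Walk.support_nil, List.mem_cons,
            List.mem_singleton, List.not_mem_nil, or_false] at hvcons
          rcases hvcons with h | h
          · exact h
          · exact absurd (h ▸ hvC) hbC
        · intro v hvP hvQ
          rw [Walk.mem_support_append_iff] at hvP hvQ
          rcases hvQ with hvC | hvcons
          · rcases hvP with hvtk | hvB
            · rcases hAC v (Walk.support_takeUntil_subset _ _ hvtk) hvC with h | h
              · exact Or.inl h
              · exact absurd (h ▸ hvtk) hb'tk
            · have hvz := hclean v ((hBsup v).mp hvB) (hCF v hvC)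
              subst hvz
              rcases hAC v hzA hvC with h | h
              · exact Or.inl h
              · exact absurd h hzb'
          · simp only [Walk.support_cons, Walk.support_nil, List.mem_cons,
              List.mem_singleton, List.not_mem_nil, or_false] at hvcons
            rcases hvcons with h | h
            · subst h
              rcases hvP with hvtk | hvB
              · exact absurd hvtk hb'tk
              · exact absurd (hQavb') (fun _ => hQavb' (hsubQ v ((hBsup v).mp hvB)))
            · exact Or.inr h
      rcases hzF with hz1 | hz2
      · exact key2 P1 P2 hP1 hP2 hd12 hbP2 hz1 (fun v h => Or.inl h) (fun v h => Or.inr h)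
      · exact key2 P2 P1 hP2 hP1 (fun v h h' => hd12 v h' h) hbP1 hz2
          (fun v h => Or.inr h) (fun v h => Or.inl h)

theorem stmt14aux {G : SimpleGraph V} (hcard : 2 < Nat.card V)
    (h2 : ∀ S : Set V, S.ncard < 2 → (G.induce Sᶜ).Connected)
    (u x y : V) (hux : u ≠ x) (huy : u ≠ y) (hxy : x ≠ y) :
    ∃ (P : G.Walk u x) (Q : G.Walk u y), P.IsPath ∧ Q.IsPath ∧
      ∀ z : V, z ∈ P.support → z ∈ Q.support → z = u := by
  have hne : Nonempty V := (Nat.card_pos_iff.mp (by omega)).1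
  have hconn : G.Connected := by
    rw [connected_iff]
    refine ⟨?_, hne⟩
    intro a b
    obtain ⟨W, _, _⟩ := reach_out h2 ∅ (by rw [Set.ncard_empty]; omega)
      (a := a) (b := b) (by simp) (by simp)
    exact ⟨W⟩
  obtain ⟨P1, P2, hP1, hP2, hd12⟩ := whitney h2 hconn (G.dist u x) u x hux le_rfl
  have hSx : (x : V) ∈ ({v | v = x ∨ v = y} : Set V) := Or.inl rfl
  obtain ⟨c1, hc1, q1, hcl1, hsb1, hq1p⟩ := exists_first_hit P1 {v | v = x ∨ v = y} hSx
  obtain ⟨c2, hc2, q2, hcl2, hsb2, hq2p⟩ := exists_first_hit P2 {v | v = x ∨ v = y} hSx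
  have hit : ∀ (A C : G.Walk u x), C.IsPath →
      (∀ v, v ∈ A.support → v ∈ C.support → v = u ∨ v = x) →
      ∀ (q : G.Walk u y),
      (∀ v ∈ q.support, (v = x ∨ v = y) → v = y) → (∀ v ∈ q.support, v ∈ A.support) →
      q.IsPath →
      ∃ (P : G.Walk u x) (Q : G.Walk u y), P.IsPath ∧ Q.IsPath ∧
        ∀ z : V, z ∈ P.support → z ∈ Q.support → z = u := by
    intro A C hC hAC q hclean hsubA hqp
    refine ⟨C, q, hC, hqp, ?_⟩
    intro v hvC hvq
    rcases hAC v (hsubA v hvq) hvC with h | h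
    · exact h
    · exact absurd (h.symm.trans (hclean v hvq (Or.inl h))) hxy
  rcases (hc1 : c1 = x ∨ c1 = y) with hc1x | hc1y
  case inr =>
    obtain rfl := hc1y.symm
    exact hit P1 P2 hP2 hd12 q1 hcl1 hsb1 (hq1p hP1)
  rcases (hc2 : c2 = x ∨ c2 = y) with hc2x | hc2y
  case inr =>
    obtain rfl := hc2y.symm
    exact hit P2 P1 hP1 (fun v h h' => hd12 v h' h) q2 hcl2 hsb2 (hq2p hP2)
  obtain rfl := hc1x.symm
  obtain rfl := hc2x.symm
  have hq1path := hq1p hP1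
  have hq2path := hq2p hP2
  have hd12' : ∀ v, v ∈ q1.support → v ∈ q2.support → v = u ∨ v = x :=
    fun v h h' => hd12 v (hsb1 v h) (hsb2 v h')
  obtain ⟨R1, R2, hR1, hR2, hrd⟩ := whitney h2 hconn (G.dist u y) u y huy le_rfl
  have hSy : (y : V) ∈ ({v | v = x ∨ v = y} : Set V) := Or.inr rfl
  obtain ⟨d1, hd1, r1, hclr1, hsbr1, hr1p⟩ := exists_first_hit R1 {v | v = x ∨ v = y} hSy
  obtain ⟨d2, hd2, r2, hclr2, hsbr2, hr2p⟩ := exists_first_hit R2 {v | v = x ∨ v = y} hSy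
  have hitX : ∀ (A C : G.Walk u y), C.IsPath →
      (∀ v, v ∈ A.support → v ∈ C.support → v = u ∨ v = y) →
      ∀ (r : G.Walk u x),
      (∀ v ∈ r.support, (v = x ∨ v = y) → v = x) → (∀ v ∈ r.support, v ∈ A.support) →
      r.IsPath →
      ∃ (P : G.Walk u x) (Q : G.Walk u y), P.IsPath ∧ Q.IsPath ∧
        ∀ z : V, z ∈ P.support → z ∈ Q.support → z = u := by
    intro A C hC hAC r hclean hsubA hrp
    refine ⟨r, C, hrp, hC, ?_⟩
    intro v hvr hvC
    rcases hAC v (hsubA v hvr) hvC with h | h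
    · exact h
    · exact absurd ((hclean v hvr (Or.inr h)).symm.trans h) hxy
  rcases (hd1 : d1 = x ∨ d1 = y) with hd1x | hd1y
  case inl =>
    obtain rfl := hd1x.symm
    exact hitX R1 R2 hR2 hrd r1 hclr1 hsbr1 (hr1p hR1)
  rcases (hd2 : d2 = x ∨ d2 = y) with hd2x | hd2y
  case inl =>
    obtain rfl := hd2x.symm
    exact hitX R2 R1 hR1 (fun v h h' => hrd v h' h) r2 hclr2 hsbr2 (hr2p hR2)
  obtain rfl := hd1y.symm
  have hr1path := hr1p hR1
  have hxr1 : x ∉ r1.support := fun h => hxy (hclr1 x h (Or.inl rfl))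
  obtain ⟨z, hzF, w0, hclean, hsub, hw0p⟩ := exists_first_hit r1.reverse
    {v | v ∈ q1.support ∨ v ∈ q2.support} (Or.inl (Walk.start_mem_support q1))
  have hw0path : w0.IsPath := hw0p hr1path.reverse
  have hBsup : ∀ v, v ∈ w0.reverse.support ↔ v ∈ w0.support := by
    intro v; rw [Walk.support_reverse, List.mem_reverse]
  have hsubr1 : ∀ v ∈ w0.support, v ∈ r1.support := by
    intro v hv
    have := hsub v hv
    rwa [Walk.support_reverse, List.mem_reverse] at this
  have hzr1 : z ∈ r1.support := hsubr1 z (Walk.end_mem_support w0)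
  have hzx : z ≠ x := fun h => hxr1 (h ▸ hzr1)
  have key : ∀ (A C : G.Walk u x), A.IsPath → C.IsPath →
      (∀ v, v ∈ A.support → v ∈ C.support → v = u ∨ v = x) → (hzA : z ∈ A.support) →
      (∀ v, v ∈ A.support → v ∈ q1.support ∨ v ∈ q2.support) →
      (∀ v, v ∈ C.support → v ∈ q1.support ∨ v ∈ q2.support) →
      ∃ (P : G.Walk u x) (Q : G.Walk u y), P.IsPath ∧ Q.IsPath ∧
        ∀ w : V, w ∈ P.support → w ∈ Q.support → w = u := by
    intro A C hA hC hAC hzA hAF hCF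
    have hxtk : x ∉ (A.takeUntil z hzA).support :=
      end_not_mem_takeUntil hA hzA (Ne.symm hzx)
    refine ⟨C, (A.takeUntil z hzA).append w0.reverse, hC, ?_, ?_⟩
    · refine isPath_append_of (hA.takeUntil hzA) hw0path.reverse ?_
      intro v hvtk hvB
      exact hclean v ((hBsup v).mp hvB)
        (hAF v (Walk.support_takeUntil_subset _ _ hvtk))
    · intro v hvC hvQ
      rw [Walk.mem_support_append_iff] at hvQ
      rcases hvQ with hvtk | hvB
      · rcases hAC v (Walk.support_takeUntil_subset _ _ hvtk) hvC with h | h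
        · exact h
        · exact absurd (h ▸ hvtk) hxtk
      · have hvz := hclean v ((hBsup v).mp hvB) (hCF v hvC)
        subst hvz
        rcases hAC v hzA hvC with h | h
        · exact h
        · exact absurd h hzx
  rcases (hzF : z ∈ q1.support ∨ z ∈ q2.support) with hz1 | hz2
  · exact key q1 q2 hq1path hq2path hd12' hz1 (fun v h => Or.inl h) (fun v h => Or.inr h)
  · exact key q2 q1 hq2path hq1path (fun v h h' => hd12' v h' h) hz2
      (fun v h => Or.inr h) (fun v h => Or.inl h)


/-- In a 2-connected graph there is a 2-fan from `u` to `x` and `y`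
for every three (distinct) vertices `u, x, y`. -/
theorem stmt14 (G : SimpleGraph V) (h2 : KConnected 2 G) (u x y : V)
    (hux : u ≠ x) (huy : u ≠ y) (hxy : x ≠ y) :
    ∃ (P : G.Walk u x) (Q : G.Walk u y), P.IsPath ∧ Q.IsPath ∧
      ∀ z : V, z ∈ P.support → z ∈ Q.support → z = u := by
  exact stmt14aux h2.1 h2.2 u x y hux huy hxy

end Paper
end
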